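/- arXiv:2410.17718 — 5 statements merged into one kernel-verified Lean document; each statement's English description precedes it below -/
import Mathlib

section
/- Let |Ψ⟩ ∈ ℂ^{d_A} ⊗ ℂ^{d_B} be a unit vector with Schmidt decomposition |Ψ⟩ = Σ_i √λ_i |ψ_A^i⟩⊗|ψ_B^i⟩, let O be a Hermitian d_A×d_A matrix, and let j ≠ k be two indices. Define P_B^{jk} = |ψ_B^j⟩⟨ψ_B^k| ⊗ |ψ_B^k⟩⟨ψ_B^j| + |ψ_B^k⟩⟨ψ_B^j| ⊗ |ψ_B^j⟩⟨ψ_B^k| on ℂ^{d_B}⊗ℂ^{d_B}. Then, identifying (ℂ^{d_A}⊗ℂ^{d_B})⊗(ℂ^{d_A}⊗ℂ^{d_B}) with (ℂ^{d_A}⊗ℂ^{d_A})⊗(ℂ^{d_B}⊗ℂ^{d_B}) via the canonical permutation of tensor factors, Tr[(Ψ ⊗ Ψ)(O ⊗ O ⊗ P_B^{jk})] = 2 λ_j λ_k |⟨ψ_A^j| O |ψ_A^k⟩|². -/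
open Matrix Kronecker

/-- The outer product `|u⟩⟨v|`, with entries `u i * conj (v j)`. -/
noncomputable def outer {m n : Type*} (u : m → ℂ) (v : n → ℂ) : Matrix m n ℂ :=
  Matrix.vecMulVec u (star v)

private lemma trace_reindex_mul {m n R : Type*} [Fintype m] [Fintype n]
    [NonUnitalNonAssocSemiring R] (e : m ≃ n) (A : Matrix m m R) (B : Matrix n n R) :
    (Matrix.reindex e e A * B).trace = (A * B.submatrix e e).trace := by
  simp only [Matrix.trace, Matrix.diag, Matrix.mul_apply, Matrix.reindex_apply,
    Matrix.submatrix_apply]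
  refine (Fintype.sum_equiv e _ _ fun p => ?_).symm
  refine Fintype.sum_equiv e _ _ fun q => ?_
  simp

private lemma reindex_ppc {dA dB : ℕ} (O O' : Matrix (Fin dA) (Fin dA) ℂ)
    (R S : Matrix (Fin dB) (Fin dB) ℂ) :
    (((O ⊗ₖ O') ⊗ₖ (R ⊗ₖ S)).submatrix
        (Equiv.prodProdProdComm (Fin dA) (Fin dB) (Fin dA) (Fin dB))
        (Equiv.prodProdProdComm (Fin dA) (Fin dB) (Fin dA) (Fin dB)))
      = (O ⊗ₖ R) ⊗ₖ (O' ⊗ₖ S) := by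
  ext ⟨⟨a, b⟩, ⟨a', b'⟩⟩ ⟨⟨c, d⟩, ⟨c', d'⟩⟩
  simp [Equiv.prodProdProdComm, kroneckerMap_apply]
  ring

private lemma trace_outer_mul {n : Type*} [Fintype n] (x : n → ℂ) (M : Matrix n n ℂ) :
    (outer x x * M).trace = star x ⬝ᵥ (M *ᵥ x) := by
  simp only [Matrix.trace, Matrix.diag, Matrix.mul_apply, outer, Matrix.vecMulVec_apply,
    dotProduct, Matrix.mulVec, Pi.star_apply, Finset.mul_sum]
  rw [Finset.sum_comm]
  refine Finset.sum_congr rfl fun q _ => Finset.sum_congr rfl fun p _ => ?_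
  ring

private lemma dot_tens {dA dB : ℕ} (a u : Fin dA → ℂ) (b w : Fin dB → ℂ) :
    star (fun p : Fin dA × Fin dB => a p.1 * b p.2) ⬝ᵥ
      (fun p : Fin dA × Fin dB => u p.1 * w p.2) =
    (star a ⬝ᵥ u) * (star b ⬝ᵥ w) := by
  simp only [dotProduct, Pi.star_apply, Fintype.sum_prod_type]
  rw [Finset.sum_mul_sum]
  refine Finset.sum_congr rfl fun p _ => Finset.sum_congr rfl fun q _ => ?_
  simp only [star_mul']
  ring

private lemma kron_mulVec_tens {dA dB : ℕ} (c : Fin dA → ℂ) (d : Fin dB → ℂ)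
    (O : Matrix (Fin dA) (Fin dA) ℂ) (R : Matrix (Fin dB) (Fin dB) ℂ) :
    ((O ⊗ₖ R) *ᵥ fun p : Fin dA × Fin dB => c p.1 * d p.2) =
    fun p : Fin dA × Fin dB => (O *ᵥ c) p.1 * (R *ᵥ d) p.2 := by
  funext p
  simp only [Matrix.mulVec, dotProduct, kroneckerMap_apply, Fintype.sum_prod_type]
  rw [Finset.sum_mul_sum]
  refine Finset.sum_congr rfl fun q _ => Finset.sum_congr rfl fun q' _ => ?_
  ring

private lemma kron_quadform {dA dB : ℕ} (a c : Fin dA → ℂ) (b d : Fin dB → ℂ)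
    (O : Matrix (Fin dA) (Fin dA) ℂ) (R : Matrix (Fin dB) (Fin dB) ℂ) :
    star (fun p : Fin dA × Fin dB => a p.1 * b p.2) ⬝ᵥ
      ((O ⊗ₖ R) *ᵥ fun p : Fin dA × Fin dB => c p.1 * d p.2) =
    (star a ⬝ᵥ (O *ᵥ c)) * (star b ⬝ᵥ (R *ᵥ d)) := by
  rw [kron_mulVec_tens, dot_tens]

private lemma outer_mulVec {n : Type*} [Fintype n] (u v y : n → ℂ) :
    outer u v *ᵥ y = (star v ⬝ᵥ y) • u := by
  funext p
  simp only [outer, Matrix.mulVec, Matrix.vecMulVec_apply, dotProduct, Pi.star_apply,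
    Pi.smul_apply, smul_eq_mul, Finset.sum_mul, Finset.mul_sum]
  refine Finset.sum_congr rfl fun q _ => ?_
  ring

private lemma dot_outer_mulVec {n : Type*} [Fintype n] (x u v y : n → ℂ) :
    star x ⬝ᵥ (outer u v *ᵥ y) = (star x ⬝ᵥ u) * (star v ⬝ᵥ y) := by
  rw [outer_mulVec, dotProduct_smul, smul_eq_mul, mul_comm]

private lemma mulVec_sum' {n ι : Type*} [Fintype n] [Fintype ι] (M : Matrix n n ℂ)
    (g : ι → n → ℂ) : M *ᵥ (∑ i, g i) = ∑ i, M *ᵥ g i := by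
  funext p
  simp only [Matrix.mulVec, dotProduct, Finset.sum_apply, Finset.mul_sum]
  rw [Finset.sum_comm]

private lemma dotProduct_sum' {n ι : Type*} [Fintype n] [Fintype ι] (a : n → ℂ)
    (g : ι → n → ℂ) : a ⬝ᵥ (∑ i, g i) = ∑ i, a ⬝ᵥ g i := by
  simp only [dotProduct, Finset.sum_apply, Finset.mul_sum]
  rw [Finset.sum_comm]

private lemma sum_dotProduct' {n ι : Type*} [Fintype n] [Fintype ι] (a : n → ℂ)
    (g : ι → n → ℂ) : (∑ i, g i) ⬝ᵥ a = ∑ i, g i ⬝ᵥ a := by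
  simp only [dotProduct, Finset.sum_apply, Finset.sum_mul]
  rw [Finset.sum_comm]

private lemma key {dA dB : ℕ} {ι : Type*} [Fintype ι] [DecidableEq ι]
    (lam : ι → ℝ) (ψA : ι → Fin dA → ℂ) (ψB : ι → Fin dB → ℂ)
    (hB : ∀ i j, star (ψB i) ⬝ᵥ ψB j = if i = j then 1 else 0)
    (O : Matrix (Fin dA) (Fin dA) ℂ) (u v : ι) :
    (outer (fun p : Fin dA × Fin dB => ∑ i, (Real.sqrt (lam i) : ℂ) * ψA i p.1 * ψB i p.2)
        (fun p : Fin dA × Fin dB => ∑ i, (Real.sqrt (lam i) : ℂ) * ψA i p.1 * ψB i p.2) *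
      (O ⊗ₖ outer (ψB u) (ψB v))).trace =
    (Real.sqrt (lam u) : ℂ) * (Real.sqrt (lam v) : ℂ) * (star (ψA u) ⬝ᵥ (O *ᵥ ψA v)) := by
  rw [trace_outer_mul]
  have expand : (fun p : Fin dA × Fin dB => ∑ i, (Real.sqrt (lam i) : ℂ) * ψA i p.1 * ψB i p.2)
      = ∑ i, (Real.sqrt (lam i) : ℂ) • (fun p : Fin dA × Fin dB => ψA i p.1 * ψB i p.2) := by
    funext p
    simp only [Finset.sum_apply, Pi.smul_apply, smul_eq_mul]
    exact Finset.sum_congr rfl fun i _ => by ring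
  rw [expand, mulVec_sum', star_sum, sum_dotProduct']
  simp only [Matrix.mulVec_smul, star_smul, smul_dotProduct, dotProduct_sum', dotProduct_smul,
    Complex.star_def, Complex.conj_ofReal, smul_eq_mul]
  have inner : ∀ m i : ι,
      star (fun p : Fin dA × Fin dB => ψA m p.1 * ψB m p.2) ⬝ᵥ
        ((O ⊗ₖ outer (ψB u) (ψB v)) *ᵥ fun p : Fin dA × Fin dB => ψA i p.1 * ψB i p.2) =
      (star (ψA m) ⬝ᵥ (O *ᵥ ψA i)) * ((if m = u then 1 else 0) * (if v = i then 1 else 0)) := by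
    intro m i
    rw [kron_quadform, dot_outer_mulVec, hB m u, hB v i]
    try ring
  simp only [inner, mul_ite, mul_one, mul_zero, ite_mul, zero_mul, Finset.sum_ite_eq,
    Finset.sum_ite_eq', Finset.mem_univ, if_true, Finset.sum_const_zero]
  try ring

/-- Let `|Ψ⟩ = ∑ i √(λ i) |ψA i⟩ ⊗ |ψB i⟩` be a Schmidt decomposition of a
unit vector, `O` a Hermitian `dA × dA` matrix, and `j ≠ k` two indices.  With
`P_B^{jk} = |ψB j⟩⟨ψB k| ⊗ |ψB k⟩⟨ψB j| + |ψB k⟩⟨ψB j| ⊗ |ψB j⟩⟨ψB k|`, and identifying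
`(ℂ^{dA}⊗ℂ^{dB})⊗(ℂ^{dA}⊗ℂ^{dB})` with `(ℂ^{dA}⊗ℂ^{dA})⊗(ℂ^{dB}⊗ℂ^{dB})` by the canonical
permutation of tensor factors, one has
`Tr[(Ψ ⊗ Ψ)(O ⊗ O ⊗ P_B^{jk})] = 2 λ_j λ_k |⟨ψA j|O|ψA k⟩|²`. -/
theorem fisher_cross_term_via_purification {dA dB : ℕ} {ι : Type*} [Fintype ι] [DecidableEq ι]
    (Ψ : Fin dA × Fin dB → ℂ)
    (lam : ι → ℝ) (ψA : ι → Fin dA → ℂ) (ψB : ι → Fin dB → ℂ)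
    (hA : ∀ i j, star (ψA i) ⬝ᵥ ψA j = if i = j then 1 else 0)
    (hB : ∀ i j, star (ψB i) ⬝ᵥ ψB j = if i = j then 1 else 0)
    (hlam : ∀ i, 0 ≤ lam i) (hsum : ∑ i, lam i = 1)
    (hΨ : Ψ = fun p => ∑ i, (Real.sqrt (lam i) : ℂ) * ψA i p.1 * ψB i p.2)
    (O : Matrix (Fin dA) (Fin dA) ℂ) (hO : O.IsHermitian)
    (j k : ι) (hjk : j ≠ k) :
    (Matrix.reindex (Equiv.prodProdProdComm (Fin dA) (Fin dB) (Fin dA) (Fin dB))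
          (Equiv.prodProdProdComm (Fin dA) (Fin dB) (Fin dA) (Fin dB))
          (outer Ψ Ψ ⊗ₖ outer Ψ Ψ) *
        ((O ⊗ₖ O) ⊗ₖ
          (outer (ψB j) (ψB k) ⊗ₖ outer (ψB k) (ψB j) +
            outer (ψB k) (ψB j) ⊗ₖ outer (ψB j) (ψB k)))).trace =
      ((2 * lam j * lam k * ‖star (ψA j) ⬝ᵥ (O *ᵥ ψA k)‖ ^ 2 : ℝ) : ℂ) := by
  rw [trace_reindex_mul]
  rw [Matrix.kronecker_add]
  rw [show ((O ⊗ₖ O) ⊗ₖ (outer (ψB j) (ψB k) ⊗ₖ outer (ψB k) (ψB j)) +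
        (O ⊗ₖ O) ⊗ₖ (outer (ψB k) (ψB j) ⊗ₖ outer (ψB j) (ψB k))).submatrix
        (Equiv.prodProdProdComm (Fin dA) (Fin dB) (Fin dA) (Fin dB))
        (Equiv.prodProdProdComm (Fin dA) (Fin dB) (Fin dA) (Fin dB)) =
      ((O ⊗ₖ O) ⊗ₖ (outer (ψB j) (ψB k) ⊗ₖ outer (ψB k) (ψB j))).submatrix
        (Equiv.prodProdProdComm (Fin dA) (Fin dB) (Fin dA) (Fin dB))
        (Equiv.prodProdProdComm (Fin dA) (Fin dB) (Fin dA) (Fin dB)) +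
      ((O ⊗ₖ O) ⊗ₖ (outer (ψB k) (ψB j) ⊗ₖ outer (ψB j) (ψB k))).submatrix
        (Equiv.prodProdProdComm (Fin dA) (Fin dB) (Fin dA) (Fin dB))
        (Equiv.prodProdProdComm (Fin dA) (Fin dB) (Fin dA) (Fin dB)) from rfl]
  rw [reindex_ppc, reindex_ppc, Matrix.mul_add, Matrix.trace_add]
  have hm : ∀ (R S : Matrix (Fin dB) (Fin dB) ℂ),
      (outer Ψ Ψ ⊗ₖ outer Ψ Ψ * ((O ⊗ₖ R) ⊗ₖ (O ⊗ₖ S))).trace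
      = (outer Ψ Ψ * (O ⊗ₖ R)).trace * (outer Ψ Ψ * (O ⊗ₖ S)).trace := by
    intro R S
    rw [← Matrix.mul_kronecker_mul, Matrix.trace_kronecker]
  rw [hm, hm]
  subst hΨ
  rw [key lam ψA ψB hB O j k, key lam ψA ψB hB O k j]
  set z := star (ψA j) ⬝ᵥ (O *ᵥ ψA k) with hz
  have hentry : ∀ p q, (starRingEnd ℂ) (O q p) = O p q := by
    intro p q
    have h : O p q = Oᴴ p q := by rw [hO.eq]
    rw [h, Matrix.conjTranspose_apply, RCLike.star_def]
  have hconj : star (ψA k) ⬝ᵥ (O *ᵥ ψA j) = starRingEnd ℂ z := by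
    rw [hz]
    simp only [dotProduct, Matrix.mulVec, Pi.star_apply, map_sum, _root_.map_mul,
      Finset.mul_sum, Complex.star_def, Complex.conj_conj]
    rw [Finset.sum_comm]
    refine Finset.sum_congr rfl fun q _ => Finset.sum_congr rfl fun p _ => ?_
    rw [hentry p q]
    ring
  rw [hconj]
  have hs : ∀ i : ι, (Real.sqrt (lam i) : ℂ) * (Real.sqrt (lam i) : ℂ) = ((lam i : ℝ) : ℂ) := by
    intro i
    rw [← Complex.ofReal_mul, Real.mul_self_sqrt (hlam i)]
  have habs : z * starRingEnd ℂ z = ((‖z‖ ^ 2 : ℝ) : ℂ) := by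
    rw [Complex.mul_conj, Complex.sq_norm]
  calc (↑(Real.sqrt (lam j)) * ↑(Real.sqrt (lam k)) * z) *
        (↑(Real.sqrt (lam k)) * ↑(Real.sqrt (lam j)) * starRingEnd ℂ z)
        + (↑(Real.sqrt (lam k)) * ↑(Real.sqrt (lam j)) * starRingEnd ℂ z) *
          (↑(Real.sqrt (lam j)) * ↑(Real.sqrt (lam k)) * z)
      = 2 * (((Real.sqrt (lam j) : ℂ) * (Real.sqrt (lam j) : ℂ)) *
          ((Real.sqrt (lam k) : ℂ) * (Real.sqrt (lam k) : ℂ))) * (z * starRingEnd ℂ z) := by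
        ring
    _ = ((2 * lam j * lam k * ‖z‖ ^ 2 : ℝ) : ℂ) := by
        rw [hs, hs, habs]
        push_cast
        ring
end

section
/- Let ρ be a d×d density matrix (positive semidefinite with trace 1), let t ≥ 1 be an integer, and let c be a Hermitian d×d matrix with ‖c‖_tr ≤ ε and ‖c‖_∞ ≤ ε for some ε ≥ 0. Then ‖(ρ+c)^t − ρ^t‖_tr ≤ (1+ε)^t − 1. In particular, if ε·t ≤ 1 then |Tr((ρ+c)^t) − Tr(ρ^t)| ≤ 2εt. -/
open Matrix
open scoped ComplexOrder
open scoped InnerProductSpace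

/-- The singular values of a square complex matrix: square roots of the eigenvalues of `Mᴴ M`. -/
noncomputable def singularValues {d : ℕ} (M : Matrix (Fin d) (Fin d) ℂ) : Fin d → ℝ :=
  fun i => Real.sqrt ((Matrix.isHermitian_conjTranspose_mul_self M).eigenvalues i)

/-- The trace norm (sum of singular values) of a square complex matrix. -/
noncomputable def traceNorm {d : ℕ} (M : Matrix (Fin d) (Fin d) ℂ) : ℝ :=
  ∑ i, singularValues M i

/-- The operator norm (largest singular value) of a square complex matrix. -/
noncomputable def opNorm {d : ℕ} (M : Matrix (Fin d) (Fin d) ℂ) : ℝ :=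
  ⨆ i, singularValues M i

namespace TN

variable {d : ℕ}

/-- `mulVec` as a map on Euclidean space. -/
noncomputable def mv (M : Matrix (Fin d) (Fin d) ℂ) (x : EuclideanSpace ℂ (Fin d)) :
    EuclideanSpace ℂ (Fin d) := Matrix.toEuclideanLin M x

lemma mv_apply (M : Matrix (Fin d) (Fin d) ℂ) (x : EuclideanSpace ℂ (Fin d)) :
    mv M x = (WithLp.equiv 2 (Fin d → ℂ)).symm (M *ᵥ (WithLp.equiv 2 (Fin d → ℂ)) x) := rfl

lemma inner_mv (M : Matrix (Fin d) (Fin d) ℂ) (x y : EuclideanSpace ℂ (Fin d)) :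
    ⟪x, mv M y⟫_ℂ = star ((WithLp.equiv 2 (Fin d → ℂ)) x) ⬝ᵥ
      (M *ᵥ (WithLp.equiv 2 (Fin d → ℂ)) y) := by
  rw [EuclideanSpace.inner_eq_star_dotProduct, dotProduct_comm]; rfl

/-- adjoint identity -/
lemma inner_mv_left (M : Matrix (Fin d) (Fin d) ℂ) (x y : EuclideanSpace ℂ (Fin d)) :
    ⟪mv M x, y⟫_ℂ = ⟪x, mv Mᴴ y⟫_ℂ := by
  rw [inner_mv, EuclideanSpace.inner_eq_star_dotProduct]
  simp only [mv_apply, WithLp.equiv_apply, WithLp.equiv_symm_apply, WithLp.ofLp_toLp]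
  rw [star_mulVec, dotProduct_comm, ← dotProduct_mulVec]

lemma mv_mul (A B : Matrix (Fin d) (Fin d) ℂ) (x : EuclideanSpace ℂ (Fin d)) :
    mv (A * B) x = mv A (mv B x) := by
  simp only [mv_apply, Equiv.apply_symm_apply, ← mulVec_mulVec]

lemma mv_one (x : EuclideanSpace ℂ (Fin d)) : mv 1 x = x := by
  simp [mv_apply]

lemma mv_add (A B : Matrix (Fin d) (Fin d) ℂ) (x : EuclideanSpace ℂ (Fin d)) :
    mv (A + B) x = mv A x + mv B x := by
  simp only [mv_apply, add_mulVec]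
  rfl

lemma mv_eigen {H : Matrix (Fin d) (Fin d) ℂ} (hH : H.IsHermitian) (i : Fin d) :
    mv H (hH.eigenvectorBasis i) = (hH.eigenvalues i : ℂ) • hH.eigenvectorBasis i := by
  have h := hH.mulVec_eigenvectorBasis i
  apply (WithLp.equiv 2 (Fin d → ℂ)).injective
  simp only [mv_apply, Equiv.apply_symm_apply]
  ext j
  have := congrFun h j
  simp only [Pi.smul_apply, smul_eq_mul, Complex.real_smul] at this ⊢
  simpa [Complex.real_smul] using this

end TN

namespace TN
variable {d : ℕ}

/-- eigenbasis of `Mᴴ M`. -/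
noncomputable def sb (M : Matrix (Fin d) (Fin d) ℂ) : OrthonormalBasis (Fin d) ℂ (EuclideanSpace ℂ (Fin d)) :=
  (Matrix.isHermitian_conjTranspose_mul_self M).eigenvectorBasis

lemma sv_eq_norm (M : Matrix (Fin d) (Fin d) ℂ) (i : Fin d) :
    singularValues M i = ‖mv M (sb M i)‖ := by
  have hH := Matrix.isHermitian_conjTranspose_mul_self M
  have h1 : (hH.eigenvalues i : ℝ) = ‖mv M (sb M i)‖ ^ 2 := by
    have h2 := hH.eigenvalues_eq i
    have h3 : ⟪mv M (sb M i), mv M (sb M i)⟫_ℂ = ⟪sb M i, mv (Mᴴ * M) (sb M i)⟫_ℂ := by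
      rw [inner_mv_left, ← mv_mul]
    have h4 : (‖mv M (sb M i)‖ : ℝ) ^ 2 = RCLike.re ⟪sb M i, mv (Mᴴ * M) (sb M i)⟫_ℂ := by
      rw [← h3, ← inner_self_eq_norm_sq (𝕜 := ℂ)]
    rw [h4, h2, inner_mv]
    rfl
  rw [singularValues, h1]
  exact Real.sqrt_sq (norm_nonneg _)

lemma sv_nonneg (M : Matrix (Fin d) (Fin d) ℂ) (i : Fin d) : 0 ≤ singularValues M i :=
  Real.sqrt_nonneg _

lemma traceNorm_nonneg (M : Matrix (Fin d) (Fin d) ℂ) : 0 ≤ traceNorm M :=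
  Finset.sum_nonneg fun i _ => sv_nonneg M i

lemma opNorm_nonneg (M : Matrix (Fin d) (Fin d) ℂ) : 0 ≤ opNorm M :=
  Real.iSup_nonneg (sv_nonneg M)

lemma sv_le_opNorm (M : Matrix (Fin d) (Fin d) ℂ) (i : Fin d) :
    singularValues M i ≤ opNorm M :=
  le_ciSup (Set.Finite.bddAbove (Set.finite_range _)) i

lemma opNorm_le {M : Matrix (Fin d) (Fin d) ℂ} {a : ℝ} (ha : 0 ≤ a)
    (h : ∀ x : EuclideanSpace ℂ (Fin d), ‖mv M x‖ ≤ a * ‖x‖) : opNorm M ≤ a := by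
  apply Real.iSup_le _ ha
  intro i
  have := h (sb M i)
  rwa [(sb M).orthonormal.1 i, mul_one, ← sv_eq_norm] at this

end TN

namespace TN
variable {d : ℕ}

lemma parseval (b : OrthonormalBasis (Fin d) ℂ (EuclideanSpace ℂ (Fin d)))
    (x : EuclideanSpace ℂ (Fin d)) : ∑ i, ‖⟪b i, x⟫_ℂ‖ ^ 2 = ‖x‖ ^ 2 := by
  have h := b.sum_inner_mul_inner x x
  have h2 : ∀ i, ⟪x, b i⟫_ℂ * ⟪b i, x⟫_ℂ = ((‖⟪b i, x⟫_ℂ‖ ^ 2 : ℝ) : ℂ) := by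
    intro i
    rw [← inner_conj_symm x (b i), RCLike.conj_mul]
    norm_cast
  have h3 : ((∑ i, ‖⟪b i, x⟫_ℂ‖ ^ 2 : ℝ) : ℂ) = ⟪x, x⟫_ℂ := by
    rw [← h, Complex.ofReal_sum]
    exact Finset.sum_congr rfl fun i _ => (h2 i).symm
  have h4 := congrArg Complex.re h3
  rw [Complex.ofReal_re] at h4
  rw [h4]
  simpa using inner_self_eq_norm_sq (𝕜 := ℂ) x

lemma norm_mv_sq (M : Matrix (Fin d) (Fin d) ℂ) (x : EuclideanSpace ℂ (Fin d)) :
    ‖mv M x‖ ^ 2 = ∑ i, (Matrix.isHermitian_conjTranspose_mul_self M).eigenvalues i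
      * ‖⟪sb M i, x⟫_ℂ‖ ^ 2 := by
  have hH := Matrix.isHermitian_conjTranspose_mul_self M
  set b := sb M with hb
  have key : ⟪x, mv (Mᴴ * M) x⟫_ℂ
      = ∑ i, ((hH.eigenvalues i * ‖⟪b i, x⟫_ℂ‖ ^ 2 : ℝ) : ℂ) := by
    rw [← b.sum_inner_mul_inner x (mv (Mᴴ * M) x)]
    refine Finset.sum_congr rfl fun i _ => ?_
    have h1 : ⟪b i, mv (Mᴴ * M) x⟫_ℂ = ⟪mv (Mᴴ * M) (b i), x⟫_ℂ := by
      rw [inner_mv_left]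
      congr 1
      exact congrArg (fun N => mv N x) hH.symm
    have h2 : ⟪mv (Mᴴ * M) (b i), x⟫_ℂ = (hH.eigenvalues i : ℂ) * ⟪b i, x⟫_ℂ := by
      rw [hb, sb, mv_eigen hH i, inner_smul_left, Complex.conj_ofReal]
    rw [h1, h2, ← inner_conj_symm x (b i), mul_comm ((hH.eigenvalues i : ℂ)) _,
      ← mul_assoc, RCLike.conj_mul]
    push_cast
    exact mul_comm _ _
  have hnorm : (‖mv M x‖ : ℝ) ^ 2 = Complex.re ⟪x, mv (Mᴴ * M) x⟫_ℂ := by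
    rw [← inner_self_eq_norm_sq (𝕜 := ℂ) (mv M x)]
    rw [mv_mul, ← inner_mv_left]
    rfl
  rw [hnorm, key, ← Complex.ofReal_sum, Complex.ofReal_re]

lemma norm_mv_le (M : Matrix (Fin d) (Fin d) ℂ) (x : EuclideanSpace ℂ (Fin d)) :
    ‖mv M x‖ ≤ opNorm M * ‖x‖ := by
  have h0 : 0 ≤ opNorm M * ‖x‖ := mul_nonneg (opNorm_nonneg M) (norm_nonneg x)
  refine le_of_pow_le_pow_left₀ two_ne_zero h0 ?_
  rw [norm_mv_sq, mul_pow, ← parseval (sb M) x, Finset.mul_sum]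
  refine Finset.sum_le_sum fun i _ => ?_
  have h1 : (Matrix.isHermitian_conjTranspose_mul_self M).eigenvalues i
      = singularValues M i ^ 2 :=
    (Real.sq_sqrt (Matrix.eigenvalues_conjTranspose_mul_self_nonneg M i)).symm
  rw [h1]
  have h2 : singularValues M i ^ 2 ≤ opNorm M ^ 2 :=
    pow_le_pow_left₀ (sv_nonneg M i) (sv_le_opNorm M i) 2
  exact mul_le_mul_of_nonneg_right h2 (by positivity)

lemma opNorm_mul_le (A B : Matrix (Fin d) (Fin d) ℂ) :
    opNorm (A * B) ≤ opNorm A * opNorm B := by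
  refine opNorm_le (mul_nonneg (opNorm_nonneg A) (opNorm_nonneg B)) fun x => ?_
  rw [mv_mul, mul_assoc]
  calc ‖mv A (mv B x)‖ ≤ opNorm A * ‖mv B x‖ := norm_mv_le A _
    _ ≤ opNorm A * (opNorm B * ‖x‖) :=
      mul_le_mul_of_nonneg_left (norm_mv_le B x) (opNorm_nonneg A)

lemma opNorm_add_le (A B : Matrix (Fin d) (Fin d) ℂ) :
    opNorm (A + B) ≤ opNorm A + opNorm B := by
  refine opNorm_le (add_nonneg (opNorm_nonneg A) (opNorm_nonneg B)) fun x => ?_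
  rw [mv_add, add_mul]
  exact (norm_add_le _ _).trans (add_le_add (norm_mv_le A x) (norm_mv_le B x))

lemma opNorm_one_le : opNorm (1 : Matrix (Fin d) (Fin d) ℂ) ≤ 1 := by
  refine opNorm_le zero_le_one fun x => ?_
  rw [mv_one, one_mul]

lemma opNorm_pow_le (A : Matrix (Fin d) (Fin d) ℂ) (n : ℕ) :
    opNorm (A ^ n) ≤ opNorm A ^ n := by
  induction n with
  | zero => simpa using opNorm_one_le
  | succ n ih =>
    rw [pow_succ, pow_succ]
    exact (opNorm_mul_le _ _).trans
      (mul_le_mul_of_nonneg_right ih (opNorm_nonneg A) |>.trans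
        (le_of_eq rfl))

end TN

namespace TN
variable {d : ℕ}

lemma trace_eq_sum_inner {H : Matrix (Fin d) (Fin d) ℂ} (hH : H.IsHermitian)
    (M : Matrix (Fin d) (Fin d) ℂ) :
    M.trace = ∑ j, ⟪(hH.eigenvectorBasis j : EuclideanSpace ℂ (Fin d)),
      mv M (hH.eigenvectorBasis j)⟫_ℂ := by
  set V : Matrix (Fin d) (Fin d) ℂ := (hH.eigenvectorUnitary : Matrix (Fin d) (Fin d) ℂ) with hVdef
  have hV : V * star V = 1 := Matrix.mem_unitaryGroup_iff.mp hH.eigenvectorUnitary.2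
  have h1 : M.trace = (star V * M * V).trace := by
    rw [Matrix.trace_mul_cycle, hV, Matrix.one_mul]
  rw [h1, Matrix.trace]
  refine Finset.sum_congr rfl fun j _ => ?_
  simp only [inner_mv, Matrix.diag_apply, Matrix.mul_apply, dotProduct, Matrix.mulVec,
    Pi.star_apply, RCLike.star_def, Finset.sum_mul, Finset.mul_sum, hVdef,
    Matrix.IsHermitian.eigenvectorUnitary_apply, Matrix.star_apply]
  rw [Finset.sum_comm]
  refine Finset.sum_congr rfl fun k _ => Finset.sum_congr rfl fun l _ => by
    simp [dotProduct]; ring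

lemma trace_eq_sum_inner_sb (M N : Matrix (Fin d) (Fin d) ℂ) :
    N.trace = ∑ j, ⟪(sb M j : EuclideanSpace ℂ (Fin d)), mv N (sb M j)⟫_ℂ :=
  trace_eq_sum_inner (Matrix.isHermitian_conjTranspose_mul_self M) N

lemma norm_trace_mul_le (X M : Matrix (Fin d) (Fin d) ℂ) :
    ‖(X * M).trace‖ ≤ opNorm X * traceNorm M := by
  rw [trace_eq_sum_inner_sb M (X * M)]
  refine (norm_sum_le _ _).trans ?_
  rw [traceNorm, Finset.mul_sum]
  refine Finset.sum_le_sum fun j _ => ?_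
  rw [mv_mul]
  calc ‖⟪(sb M j : EuclideanSpace ℂ (Fin d)), mv X (mv M (sb M j))⟫_ℂ‖
      ≤ ‖(sb M j : EuclideanSpace ℂ (Fin d))‖ * ‖mv X (mv M (sb M j))‖ :=
        norm_inner_le_norm _ _
    _ = ‖mv X (mv M (sb M j))‖ := by rw [(sb M).orthonormal.1 j, one_mul]
    _ ≤ opNorm X * ‖mv M (sb M j)‖ := norm_mv_le X _
    _ = opNorm X * singularValues M j := by rw [← sv_eq_norm]

lemma norm_trace_le (M : Matrix (Fin d) (Fin d) ℂ) : ‖M.trace‖ ≤ traceNorm M := by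
  have := norm_trace_mul_le 1 M
  rw [Matrix.one_mul] at this
  refine this.trans ?_
  calc opNorm (1 : Matrix (Fin d) (Fin d) ℂ) * traceNorm M
      ≤ 1 * traceNorm M :=
        mul_le_mul_of_nonneg_right opNorm_one_le (traceNorm_nonneg M)
    _ = traceNorm M := one_mul _

/-- Left singular vectors. -/
noncomputable def su (M : Matrix (Fin d) (Fin d) ℂ) (j : Fin d) : EuclideanSpace ℂ (Fin d) :=
  ((singularValues M j : ℂ))⁻¹ • mv M (sb M j)

lemma mv_sb_eq (M : Matrix (Fin d) (Fin d) ℂ) (j : Fin d) :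
    mv M (sb M j) = (singularValues M j : ℂ) • su M j := by
  by_cases h : singularValues M j = 0
  · have : ‖mv M (sb M j)‖ = 0 := by rw [← sv_eq_norm, h]
    rw [norm_eq_zero] at this
    simp [su, this, h]
  · rw [su, smul_inv_smul₀ (by exact_mod_cast h)]

lemma inner_mv_mv (M : Matrix (Fin d) (Fin d) ℂ) (i j : Fin d) :
    ⟪mv M (sb M i), mv M (sb M j)⟫_ℂ
      = ((singularValues M j : ℂ)) ^ 2 * (if i = j then 1 else 0) := by
  have hH := Matrix.isHermitian_conjTranspose_mul_self M
  rw [inner_mv_left, ← mv_mul]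
  have : mv (Mᴴ * M) (sb M j) = (hH.eigenvalues j : ℂ) • sb M j := mv_eigen hH j
  rw [this, inner_smul_right]
  have h1 : (hH.eigenvalues j : ℝ) = singularValues M j ^ 2 :=
    (Real.sq_sqrt (Matrix.eigenvalues_conjTranspose_mul_self_nonneg M j)).symm
  have h2 : ⟪(sb M i : EuclideanSpace ℂ (Fin d)), sb M j⟫_ℂ = if i = j then 1 else 0 :=
    orthonormal_iff_ite.mp (sb M).orthonormal i j
  rw [h2, h1]
  push_cast
  ring

lemma inner_su (M : Matrix (Fin d) (Fin d) ℂ) (i j : Fin d) :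
    ⟪su M i, su M j⟫_ℂ
      = if i = j ∧ singularValues M j ≠ 0 then 1 else 0 := by
  simp only [su, inner_smul_left, inner_smul_right, inner_mv_mv, map_inv₀,
    Complex.conj_ofReal]
  by_cases hij : i = j
  · subst hij
    by_cases h : singularValues M i = 0
    · simp [h]
    · have h' : (singularValues M i : ℂ) ≠ 0 := by exact_mod_cast h
      rw [if_pos (And.intro rfl h)]
      field_simp
      simp
  · simp [hij]

lemma su_zero {M : Matrix (Fin d) (Fin d) ℂ} {j : Fin d}
    (h : singularValues M j = 0) : su M j = 0 := by
  have : ‖mv M (sb M j)‖ = 0 := by rw [← sv_eq_norm, h]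
  rw [norm_eq_zero] at this
  simp [su, this]

/-- The dual unitary-like matrix attaining the trace norm. -/
noncomputable def dualU (M : Matrix (Fin d) (Fin d) ℂ) : Matrix (Fin d) (Fin d) ℂ :=
  ∑ j, Matrix.vecMulVec (⇑(sb M j)) (star (⇑(su M j)))

lemma mv_sum (s : Finset (Fin d)) (A : Fin d → Matrix (Fin d) (Fin d) ℂ)
    (x : EuclideanSpace ℂ (Fin d)) : mv (∑ j ∈ s, A j) x = ∑ j ∈ s, mv (A j) x := by
  have h : Matrix.toEuclideanLin (∑ j ∈ s, A j)
      = ∑ j ∈ s, Matrix.toEuclideanLin (A j) := map_sum _ _ _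
  show Matrix.toEuclideanLin (∑ j ∈ s, A j) x = _
  rw [h, LinearMap.sum_apply]
  rfl

lemma mv_vecMulVec (w v : Fin d → ℂ) (x : EuclideanSpace ℂ (Fin d)) :
    mv (Matrix.vecMulVec w v) x
      = (v ⬝ᵥ (WithLp.equiv 2 (Fin d → ℂ)) x) • (WithLp.equiv 2 (Fin d → ℂ)).symm w := by
  apply (WithLp.equiv 2 (Fin d → ℂ)).injective
  ext i
  show (Matrix.vecMulVec w v *ᵥ _) i = (WithLp.equiv 2 (Fin d → ℂ))
    (_ • (WithLp.equiv 2 (Fin d → ℂ)).symm w) i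
  have hr : (WithLp.equiv 2 (Fin d → ℂ))
      ((v ⬝ᵥ (WithLp.equiv 2 (Fin d → ℂ)) x) • (WithLp.equiv 2 (Fin d → ℂ)).symm w) i
      = (v ⬝ᵥ (WithLp.equiv 2 (Fin d → ℂ)) x) * w i := rfl
  rw [hr]
  simp only [Matrix.mulVec, Matrix.vecMulVec_apply, dotProduct, Finset.sum_mul]
  exact Finset.sum_congr rfl fun k _ => mul_rotate _ _ _

lemma mv_dualU (M : Matrix (Fin d) (Fin d) ℂ) (x : EuclideanSpace ℂ (Fin d)) :
    mv (dualU M) x = ∑ j, ⟪su M j, x⟫_ℂ • (sb M j : EuclideanSpace ℂ (Fin d)) := by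
  rw [dualU, mv_sum]
  refine Finset.sum_congr rfl fun j _ => ?_
  rw [mv_vecMulVec]
  congr 1
  rw [EuclideanSpace.inner_eq_star_dotProduct, dotProduct_comm]
  rfl

lemma inner_sb_mv_dualU (M : Matrix (Fin d) (Fin d) ℂ) (j : Fin d)
    (x : EuclideanSpace ℂ (Fin d)) :
    ⟪(sb M j : EuclideanSpace ℂ (Fin d)), mv (dualU M) x⟫_ℂ = ⟪su M j, x⟫_ℂ := by
  rw [mv_dualU]
  exact (sb M).orthonormal.inner_right_fintype (fun i => ⟪su M i, x⟫_ℂ) j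

lemma norm_mv_dualU_sq (M : Matrix (Fin d) (Fin d) ℂ) (x : EuclideanSpace ℂ (Fin d)) :
    ‖mv (dualU M) x‖ ^ 2 = ∑ j, ‖⟪su M j, x⟫_ℂ‖ ^ 2 := by
  have h : mv (dualU M) x
      = (sb M).repr.symm (WithLp.toLp 2 (fun j => ⟪su M j, x⟫_ℂ)) := by
    rw [mv_dualU, ← OrthonormalBasis.sum_repr_symm]
  rw [h, LinearIsometryEquiv.norm_map, EuclideanSpace.norm_eq,
    Real.sq_sqrt (Finset.sum_nonneg fun j _ => sq_nonneg _)]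

lemma bessel_su (M : Matrix (Fin d) (Fin d) ℂ) (x : EuclideanSpace ℂ (Fin d)) :
    ∑ j, ‖⟪su M j, x⟫_ℂ‖ ^ 2 ≤ ‖x‖ ^ 2 := by
  classical
  set s : Finset (Fin d) := Finset.univ.filter (fun j => singularValues M j ≠ 0) with hs
  have h1 : ∑ j, ‖⟪su M j, x⟫_ℂ‖ ^ 2 = ∑ j ∈ s, ‖⟪su M j, x⟫_ℂ‖ ^ 2 := by
    refine (Finset.sum_filter_of_ne fun j _ hne => ?_).symm
    by_contra h
    rw [su_zero (by simpa using h)] at hne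
    simp at hne
  have orth : Orthonormal ℂ (fun (j : {j : Fin d // j ∈ s}) => su M j.1) := by
    rw [orthonormal_iff_ite]
    intro i j
    have hj : singularValues M j.1 ≠ 0 := by
      have h2 := j.2
      simp only [hs, Finset.mem_filter] at h2
      exact h2.2
    rw [inner_su]
    by_cases hij : i = j
    · subst hij
      simp [hj]
    · have : i.1 ≠ j.1 := fun h => hij (Subtype.ext h)
      simp [this, hij]
  have h2 : ∑ j ∈ s, ‖⟪su M j, x⟫_ℂ‖ ^ 2
      = ∑ j : {j : Fin d // j ∈ s}, ‖⟪su M j.1, x⟫_ℂ‖ ^ 2 :=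
    (Finset.sum_coe_sort s _).symm
  rw [h1, h2]
  exact orth.sum_inner_products_le x

lemma opNorm_dualU_le (M : Matrix (Fin d) (Fin d) ℂ) : opNorm (dualU M) ≤ 1 := by
  refine opNorm_le zero_le_one fun x => ?_
  rw [one_mul]
  refine le_of_pow_le_pow_left₀ two_ne_zero (norm_nonneg x) ?_
  rw [norm_mv_dualU_sq]
  exact bessel_su M x

lemma trace_dualU (M : Matrix (Fin d) (Fin d) ℂ) :
    (dualU M * M).trace = (traceNorm M : ℂ) := by
  rw [trace_eq_sum_inner_sb M (dualU M * M)]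
  have h : ∀ j, ⟪(sb M j : EuclideanSpace ℂ (Fin d)), mv (dualU M * M) (sb M j)⟫_ℂ
      = (singularValues M j : ℂ) := by
    intro j
    rw [mv_mul, inner_sb_mv_dualU, mv_sb_eq, inner_smul_right, inner_su]
    by_cases h0 : singularValues M j = 0
    · simp [h0]
    · simp [h0]
  rw [Finset.sum_congr rfl fun j _ => h j, traceNorm, Complex.ofReal_sum]

lemma traceNorm_eq_re (M : Matrix (Fin d) (Fin d) ℂ) :
    traceNorm M = ((dualU M * M).trace).re := by
  rw [trace_dualU, Complex.ofReal_re]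

lemma traceNorm_add_le (A B : Matrix (Fin d) (Fin d) ℂ) :
    traceNorm (A + B) ≤ traceNorm A + traceNorm B := by
  have h := traceNorm_eq_re (A + B)
  rw [Matrix.mul_add, Matrix.trace_add, Complex.add_re] at h
  rw [h]
  have hA : ((dualU (A + B) * A).trace).re ≤ traceNorm A := by
    calc ((dualU (A + B) * A).trace).re ≤ ‖(dualU (A + B) * A).trace‖ := Complex.re_le_norm _
      _ ≤ opNorm (dualU (A + B)) * traceNorm A := norm_trace_mul_le _ _
      _ ≤ 1 * traceNorm A :=
        mul_le_mul_of_nonneg_right (opNorm_dualU_le _) (traceNorm_nonneg A)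
      _ = traceNorm A := one_mul _
  have hB : ((dualU (A + B) * B).trace).re ≤ traceNorm B := by
    calc ((dualU (A + B) * B).trace).re ≤ ‖(dualU (A + B) * B).trace‖ := Complex.re_le_norm _
      _ ≤ opNorm (dualU (A + B)) * traceNorm B := norm_trace_mul_le _ _
      _ ≤ 1 * traceNorm B :=
        mul_le_mul_of_nonneg_right (opNorm_dualU_le _) (traceNorm_nonneg B)
      _ = traceNorm B := one_mul _
  exact add_le_add hA hB

lemma traceNorm_mul_le_left (X M : Matrix (Fin d) (Fin d) ℂ) :
    traceNorm (X * M) ≤ opNorm X * traceNorm M := by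
  have h := traceNorm_eq_re (X * M)
  rw [h]
  calc ((dualU (X * M) * (X * M)).trace).re ≤ ‖(dualU (X * M) * (X * M)).trace‖ :=
        Complex.re_le_norm _
    _ = ‖((dualU (X * M) * X) * M).trace‖ := by rw [Matrix.mul_assoc]
    _ ≤ opNorm (dualU (X * M) * X) * traceNorm M := norm_trace_mul_le _ _
    _ ≤ (opNorm (dualU (X * M)) * opNorm X) * traceNorm M :=
        mul_le_mul_of_nonneg_right (opNorm_mul_le _ _) (traceNorm_nonneg M)
    _ ≤ (1 * opNorm X) * traceNorm M := by
        refine mul_le_mul_of_nonneg_right ?_ (traceNorm_nonneg M)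
        exact mul_le_mul_of_nonneg_right (opNorm_dualU_le _) (opNorm_nonneg X)
    _ = opNorm X * traceNorm M := by rw [one_mul]

lemma traceNorm_mul_le_right (M X : Matrix (Fin d) (Fin d) ℂ) :
    traceNorm (M * X) ≤ traceNorm M * opNorm X := by
  have h := traceNorm_eq_re (M * X)
  rw [h]
  calc ((dualU (M * X) * (M * X)).trace).re ≤ ‖(dualU (M * X) * (M * X)).trace‖ :=
        Complex.re_le_norm _
    _ = ‖((X * dualU (M * X)) * M).trace‖ := by
        rw [← Matrix.mul_assoc, Matrix.trace_mul_cycle]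
    _ ≤ opNorm (X * dualU (M * X)) * traceNorm M := norm_trace_mul_le _ _
    _ ≤ (opNorm X * opNorm (dualU (M * X))) * traceNorm M :=
        mul_le_mul_of_nonneg_right (opNorm_mul_le _ _) (traceNorm_nonneg M)
    _ ≤ (opNorm X * 1) * traceNorm M := by
        refine mul_le_mul_of_nonneg_right ?_ (traceNorm_nonneg M)
        exact mul_le_mul_of_nonneg_left (opNorm_dualU_le _) (opNorm_nonneg X)
    _ = traceNorm M * opNorm X := by ring

end TN

namespace TN
variable {d : ℕ}

lemma sum_eigenvalues_eq_trace {H : Matrix (Fin d) (Fin d) ℂ} (hH : H.IsHermitian) :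
    ∑ i, (hH.eigenvalues i : ℂ) = H.trace := by
  rw [trace_eq_sum_inner hH H]
  refine Finset.sum_congr rfl fun i _ => ?_
  rw [mv_eigen hH i, inner_smul_right, inner_self_eq_norm_sq_to_K,
    hH.eigenvectorBasis.orthonormal.1 i]
  norm_num

lemma density_eigenvalues_le_one {ρ : Matrix (Fin d) (Fin d) ℂ} (hρ : ρ.PosSemidef)
    (htr : ρ.trace = 1) (i : Fin d) : hρ.1.eigenvalues i ≤ 1 := by
  have hsum : ∑ j, hρ.1.eigenvalues j = 1 := by
    have h := sum_eigenvalues_eq_trace hρ.1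
    rw [htr, ← Complex.ofReal_sum] at h
    exact_mod_cast h
  calc hρ.1.eigenvalues i ≤ ∑ j, hρ.1.eigenvalues j :=
        Finset.single_le_sum (fun j _ => hρ.eigenvalues_nonneg j) (Finset.mem_univ i)
    _ = 1 := hsum

lemma opNorm_density_le {ρ : Matrix (Fin d) (Fin d) ℂ} (hρ : ρ.PosSemidef)
    (htr : ρ.trace = 1) : opNorm ρ ≤ 1 := by
  set b := hρ.1.eigenvectorBasis with hb
  refine opNorm_le zero_le_one fun x => ?_
  rw [one_mul]
  have hmv : mv ρ x = b.repr.symm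
      (WithLp.toLp 2 (fun i => ((hρ.1.eigenvalues i : ℂ)) * ⟪b i, x⟫_ℂ)) := by
    conv_lhs => rw [← b.sum_repr' x]
    have h1 : mv ρ (∑ i, (⟪b i, x⟫_ℂ) • b i) = ∑ i, ⟪b i, x⟫_ℂ • mv ρ (b i) := by
      show Matrix.toEuclideanLin ρ _ = _
      rw [map_sum]
      exact Finset.sum_congr rfl fun i _ => by rw [_root_.map_smul]; rfl
    rw [h1, ← OrthonormalBasis.sum_repr_symm]
    refine Finset.sum_congr rfl fun i _ => ?_
    rw [mv_eigen hρ.1 i, smul_smul, mul_comm]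
  rw [hmv, LinearIsometryEquiv.norm_map]
  refine le_of_pow_le_pow_left₀ two_ne_zero (norm_nonneg x) ?_
  rw [EuclideanSpace.norm_eq, Real.sq_sqrt (Finset.sum_nonneg fun j _ => sq_nonneg _),
    ← parseval b x]
  refine Finset.sum_le_sum fun i _ => ?_
  have hnm : ‖(hρ.1.eigenvalues i : ℂ) * ⟪b i, x⟫_ℂ‖
      = hρ.1.eigenvalues i * ‖⟪b i, x⟫_ℂ‖ := by
    rw [norm_mul, Complex.norm_real, Real.norm_eq_abs,
      abs_of_nonneg (hρ.eigenvalues_nonneg i)]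
  rw [hnm, mul_pow]
  have h01 : hρ.1.eigenvalues i ^ 2 ≤ 1 :=
    pow_le_one₀ (hρ.eigenvalues_nonneg i) (density_eigenvalues_le_one hρ htr i)
  calc hρ.1.eigenvalues i ^ 2 * ‖⟪b i, x⟫_ℂ‖ ^ 2 ≤ 1 * ‖⟪b i, x⟫_ℂ‖ ^ 2 :=
        mul_le_mul_of_nonneg_right h01 (sq_nonneg _)
    _ = ‖⟪b i, x⟫_ℂ‖ ^ 2 := one_mul _

end TN

namespace TN
variable {d : ℕ}

lemma traceNorm_zero : traceNorm (0 : Matrix (Fin d) (Fin d) ℂ) = 0 := by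
  have h : ∀ i, singularValues (0 : Matrix (Fin d) (Fin d) ℂ) i = 0 := by
    intro i
    rw [sv_eq_norm]
    have : mv (0 : Matrix (Fin d) (Fin d) ℂ) (sb (0 : Matrix (Fin d) (Fin d) ℂ) i) = 0 := by
      show Matrix.toEuclideanLin (0 : Matrix (Fin d) (Fin d) ℂ) _ = 0
      rw [map_zero]
      rfl
    rw [this, norm_zero]
  simp [traceNorm, h]

lemma key_induction (ρ c : Matrix (Fin d) (Fin d) ℂ) (ε : ℝ) (hε : 0 ≤ ε)
    (hρop : opNorm ρ ≤ 1) (hctr : traceNorm c ≤ ε) (hcop : opNorm c ≤ ε) (n : ℕ) :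
    traceNorm ((ρ + c) ^ n - ρ ^ n) ≤ (1 + ε) ^ n - 1 := by
  induction n with
  | zero => simp [traceNorm_zero]
  | succ n ih =>
    have hX : opNorm (ρ + c) ≤ 1 + ε :=
      (opNorm_add_le ρ c).trans (add_le_add hρop hcop)
    have hXn : opNorm ((ρ + c) ^ n) ≤ (1 + ε) ^ n :=
      (opNorm_pow_le _ n).trans (pow_le_pow_left₀ (opNorm_nonneg _) hX n)
    have hsplit : (ρ + c) ^ (n + 1) - ρ ^ (n + 1)
        = ((ρ + c) ^ n - ρ ^ n) * ρ + (ρ + c) ^ n * c := by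
      rw [pow_succ, pow_succ]
      noncomm_ring
    rw [hsplit]
    have h1 : traceNorm (((ρ + c) ^ n - ρ ^ n) * ρ) ≤ (1 + ε) ^ n - 1 := by
      calc traceNorm (((ρ + c) ^ n - ρ ^ n) * ρ)
          ≤ traceNorm ((ρ + c) ^ n - ρ ^ n) * opNorm ρ := traceNorm_mul_le_right _ _
        _ ≤ ((1 + ε) ^ n - 1) * 1 := by
            refine mul_le_mul ih hρop (opNorm_nonneg _) ?_
            have := traceNorm_nonneg ((ρ + c) ^ n - ρ ^ n)
            linarith
        _ = (1 + ε) ^ n - 1 := mul_one _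
    have h2 : traceNorm ((ρ + c) ^ n * c) ≤ (1 + ε) ^ n * ε := by
      calc traceNorm ((ρ + c) ^ n * c)
          ≤ opNorm ((ρ + c) ^ n) * traceNorm c := traceNorm_mul_le_left _ _
        _ ≤ (1 + ε) ^ n * ε :=
            mul_le_mul hXn hctr (traceNorm_nonneg _) (by positivity)
    calc traceNorm (((ρ + c) ^ n - ρ ^ n) * ρ + (ρ + c) ^ n * c)
        ≤ traceNorm (((ρ + c) ^ n - ρ ^ n) * ρ) + traceNorm ((ρ + c) ^ n * c) :=
          traceNorm_add_le _ _
      _ ≤ ((1 + ε) ^ n - 1) + (1 + ε) ^ n * ε := add_le_add h1 h2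
      _ = (1 + ε) ^ (n + 1) - 1 := by ring

lemma numeric_bound (ε : ℝ) (hε : 0 ≤ ε) (t : ℕ) (h : ε * t ≤ 1) :
    (1 + ε) ^ t - 1 ≤ 2 * ε * t := by
  have hx0 : 0 ≤ ε * (t : ℝ) := mul_nonneg hε (Nat.cast_nonneg t)
  have h1 : (1 + ε) ^ t ≤ Real.exp (ε * t) := by
    calc (1 + ε) ^ t ≤ (Real.exp ε) ^ t :=
          pow_le_pow_left₀ (by linarith) (by linarith [Real.add_one_le_exp ε]) t
      _ = Real.exp (ε * t) := by rw [← Real.exp_nat_mul, mul_comm]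
  set x := ε * (t : ℝ) with hxdef
  have h2 : Real.exp x ≤ 1 + 2 * x := by
    have hcvx := convexOn_exp.2 (Set.mem_univ (0 : ℝ)) (Set.mem_univ 1)
      (by linarith : (0 : ℝ) ≤ 1 - x) hx0 (by ring)
    simp only [smul_eq_mul, mul_zero, zero_add, mul_one, Real.exp_zero] at hcvx
    have he : Real.exp 1 < 2.7182818286 := Real.exp_one_lt_d9
    nlinarith [hcvx, he, hx0]
  calc (1 + ε) ^ t - 1 ≤ Real.exp x - 1 := by linarith
    _ ≤ 2 * x := by linarith
    _ = 2 * ε * t := by ring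

end TN


/-- Let `ρ` be a `d × d` density matrix, `t ≥ 1` an integer, and `c` a
Hermitian matrix with `‖c‖_tr ≤ ε` and `‖c‖_∞ ≤ ε` for some `ε ≥ 0`.  Then
`‖(ρ+c)^t − ρ^t‖_tr ≤ (1+ε)^t − 1`; in particular, if `ε·t ≤ 1` then
`|Tr((ρ+c)^t) − Tr(ρ^t)| ≤ 2εt`. -/
theorem moment_perturbation_bound {d : ℕ} (ρ c : Matrix (Fin d) (Fin d) ℂ)
    (hρ : ρ.PosSemidef) (hρtr : ρ.trace = 1)
    (hc : c.IsHermitian) (ε : ℝ) (hε : 0 ≤ ε)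
    (hctr : traceNorm c ≤ ε) (hcop : opNorm c ≤ ε)
    (t : ℕ) (ht : 1 ≤ t) :
    traceNorm ((ρ + c) ^ t - ρ ^ t) ≤ (1 + ε) ^ t - 1 ∧
    (ε * t ≤ 1 →
      ‖((ρ + c) ^ t).trace - (ρ ^ t).trace‖ ≤ 2 * ε * t) := by
  have hρop : opNorm ρ ≤ 1 := TN.opNorm_density_le hρ hρtr
  have hmain := TN.key_induction ρ c ε hε hρop hctr hcop t
  refine ⟨hmain, fun hεt => ?_⟩
  have h1 : ((ρ + c) ^ t).trace - (ρ ^ t).trace = ((ρ + c) ^ t - ρ ^ t).trace :=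
    (Matrix.trace_sub _ _).symm
  rw [h1]
  calc ‖((ρ + c) ^ t - ρ ^ t).trace‖ ≤ traceNorm ((ρ + c) ^ t - ρ ^ t) :=
        TN.norm_trace_le _
    _ ≤ (1 + ε) ^ t - 1 := hmain
    _ ≤ 2 * ε * t := TN.numeric_bound ε hε t hεt
end

section
/- Let M be a d×d positive semidefinite Hermitian matrix whose largest eigenvalue λ exceeds its second-largest eigenvalue (with multiplicity) by at least Δ > 0. Let M′ be a Hermitian d×d matrix with ‖M − M′‖_tr ≤ ε, where ε ≤ Δ/2, and let λ′ be the largest eigenvalue of M′. Then |λ − λ′| ≤ ε. Moreover, if |ψ⟩ and |ψ′⟩ are unit eigenvectors of M and M′ for the eigenvalues λ and λ′ respectively, then ‖|ψ⟩⟨ψ| − |ψ′⟩⟨ψ′|‖_tr ≤ 2√(2ε/Δ). -/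
open Matrix
open scoped ComplexOrder

/-! ### Auxiliary lemmas -/

lemma outer_mul_outer {d : ℕ} (a b c e : Fin d → ℂ) :
    outer a b * outer c e = (star b ⬝ᵥ c) • outer a e := by
  ext i j
  simp only [outer, Matrix.mul_apply, vecMulVec_apply, Matrix.smul_apply, dotProduct,
    Finset.sum_mul, smul_eq_mul, Pi.star_apply]
  exact Finset.sum_congr rfl fun k _ => by ring

lemma trace_outer {d : ℕ} (u v : Fin d → ℂ) : (outer u v).trace = star v ⬝ᵥ u := by
  simp only [outer, trace, diag_apply, vecMulVec_apply, dotProduct, Pi.star_apply]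
  exact Finset.sum_congr rfl fun k _ => by ring

lemma outer_conjTranspose {d : ℕ} (u v : Fin d → ℂ) : (outer u v)ᴴ = outer v u := by
  ext i j
  simp [outer, conjTranspose_apply, vecMulVec_apply, mul_comm]

lemma traceNorm_nonneg' {d : ℕ} (M : Matrix (Fin d) (Fin d) ℂ) : 0 ≤ traceNorm M :=
  Finset.sum_nonneg fun _ _ => Real.sqrt_nonneg _

lemma unitary_conj_cancel {d : ℕ} (U : Matrix.unitaryGroup (Fin d) ℂ)
    {X Y : Matrix (Fin d) (Fin d) ℂ}
    (h : (U : Matrix (Fin d) (Fin d) ℂ) * X * star (U : Matrix (Fin d) (Fin d) ℂ)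
       = (U : Matrix (Fin d) (Fin d) ℂ) * Y * star (U : Matrix (Fin d) (Fin d) ℂ)) : X = Y := by
  have h2 := congrArg
    (fun Z => star (U : Matrix (Fin d) (Fin d) ℂ) * Z * (U : Matrix (Fin d) (Fin d) ℂ)) h
  simp only [Matrix.mul_assoc] at h2
  simp only [Unitary.coe_star_mul_self U, Matrix.mul_one] at h2
  simp only [← Matrix.mul_assoc] at h2
  simpa only [Unitary.coe_star_mul_self U, Matrix.one_mul] using h2

lemma trace_unitary_conj {d : ℕ} (U : Matrix.unitaryGroup (Fin d) ℂ)
    (X : Matrix (Fin d) (Fin d) ℂ) :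
    ((U : Matrix (Fin d) (Fin d) ℂ) * X * star (U : Matrix (Fin d) (Fin d) ℂ)).trace = X.trace := by
  rw [Matrix.trace_mul_cycle]
  rw [show star (U : Matrix (Fin d) (Fin d) ℂ) * U = 1 from Unitary.coe_star_mul_self U]
  rw [Matrix.one_mul]

lemma conj_diag_mul_conj_diag {d : ℕ} (U : Matrix.unitaryGroup (Fin d) ℂ)
    (f g : Fin d → ℂ) :
    ((U : Matrix (Fin d) (Fin d) ℂ) * diagonal f * star (U : Matrix (Fin d) (Fin d) ℂ)) *
      ((U : Matrix (Fin d) (Fin d) ℂ) * diagonal g * star (U : Matrix (Fin d) (Fin d) ℂ))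
    = (U : Matrix (Fin d) (Fin d) ℂ) * diagonal (fun i => f i * g i) *
        star (U : Matrix (Fin d) (Fin d) ℂ) := by
  have h1 : star (U : Matrix (Fin d) (Fin d) ℂ) * U = 1 := Unitary.coe_star_mul_self U
  calc ((U : Matrix (Fin d) (Fin d) ℂ) * diagonal f * star (U : Matrix (Fin d) (Fin d) ℂ)) *
      ((U : Matrix (Fin d) (Fin d) ℂ) * diagonal g * star (U : Matrix (Fin d) (Fin d) ℂ))
      = (U : Matrix (Fin d) (Fin d) ℂ) *
          (diagonal f * (star (U : Matrix (Fin d) (Fin d) ℂ) * U) * diagonal g) *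
          star (U : Matrix (Fin d) (Fin d) ℂ) := by
        simp only [Matrix.mul_assoc]
    _ = _ := by rw [h1, Matrix.mul_one, Matrix.diagonal_mul_diagonal]

lemma traceNorm_hermitian {d : ℕ} {A : Matrix (Fin d) (Fin d) ℂ} (hA : A.IsHermitian) :
    traceNorm A = ∑ i, |hA.eigenvalues i| := by
  have hBH : (Aᴴ * A).IsHermitian := Matrix.isHermitian_conjTranspose_mul_self A
  set U : Matrix (Fin d) (Fin d) ℂ := (hA.eigenvectorUnitary : Matrix (Fin d) (Fin d) ℂ) with hU
  have hsq : Aᴴ * A = U * diagonal (RCLike.ofReal ∘ fun i => hA.eigenvalues i ^ 2) * star U := by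
    rw [hA.eq]
    conv_lhs => rw [hA.spectral_theorem, Unitary.conjStarAlgAut_apply]
    rw [conj_diag_mul_conj_diag]
    congr 1
    congr 1
    congr 1
    funext i
    simp [pow_two]
  have hc : (Aᴴ * A).charpoly
      = (diagonal (RCLike.ofReal ∘ fun i => hA.eigenvalues i ^ 2) : Matrix (Fin d) (Fin d) ℂ).charpoly := by
    rw [hsq, Matrix.charpoly_mul_comm, ← Matrix.mul_assoc,
      show star U * U = 1 from Unitary.coe_star_mul_self hA.eigenvectorUnitary, Matrix.one_mul]
  have hroots := hBH.roots_charpoly_eq_eigenvalues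
  rw [hc, Matrix.charpoly_diagonal, Polynomial.roots_prod _ _ (Finset.prod_ne_zero_iff.mpr fun i _ => Polynomial.X_sub_C_ne_zero _)] at hroots
  simp only [Polynomial.roots_X_sub_C, Multiset.bind_singleton] at hroots
  have hm : Multiset.map (fun i => hBH.eigenvalues i) Finset.univ.val
      = Multiset.map (fun i => hA.eigenvalues i ^ 2) Finset.univ.val := by
    apply Multiset.map_injective (RCLike.ofReal_injective (K := ℂ))
    simp only [Multiset.map_map]
    rw [← hroots]
  have h1 : traceNorm A = (Multiset.map Real.sqrt
      (Multiset.map (fun i => hBH.eigenvalues i) Finset.univ.val)).sum := by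
    rw [Multiset.map_map]
    rfl
  rw [h1, hm, Multiset.map_map]
  show ∑ i, Real.sqrt (hA.eigenvalues i ^ 2) = _
  simp only [Real.sqrt_sq_eq_abs]

lemma quad_expand {d : ℕ} {A : Matrix (Fin d) (Fin d) ℂ} (hA : A.IsHermitian) (x : Fin d → ℂ) :
    star x ⬝ᵥ (A *ᵥ x) = ∑ i, (hA.eigenvalues i : ℂ) *
      (Complex.normSq ((star (hA.eigenvectorUnitary : Matrix (Fin d) (Fin d) ℂ) *ᵥ x) i) : ℂ) := by
  set U : Matrix (Fin d) (Fin d) ℂ := (hA.eigenvectorUnitary : Matrix (Fin d) (Fin d) ℂ) with hU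
  set y : Fin d → ℂ := star U *ᵥ x with hy
  have hsy : star y = star x ᵥ* U := by
    rw [hy, star_mulVec, Matrix.star_eq_conjTranspose, Matrix.conjTranspose_conjTranspose]
  have hrcl : (RCLike.ofReal : ℝ → ℂ) = Complex.ofReal := rfl
  conv_lhs => rw [hA.spectral_theorem, Unitary.conjStarAlgAut_apply]
  simp only [hrcl]
  rw [← Matrix.mulVec_mulVec, ← Matrix.mulVec_mulVec, Matrix.dotProduct_mulVec, ← hsy, ← hy]
  show ∑ i, (star y) i * (Matrix.diagonal (Complex.ofReal ∘ hA.eigenvalues) *ᵥ y) i = _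
  refine Finset.sum_congr rfl fun i _ => ?_
  rw [Matrix.mulVec_diagonal]
  simp only [Pi.star_apply, Function.comp_apply, Complex.star_def]
  rw [show (starRingEnd ℂ) (y i) * ((hA.eigenvalues i : ℂ) * y i)
      = (hA.eigenvalues i : ℂ) * (y i * (starRingEnd ℂ) (y i)) by ring, Complex.mul_conj]

lemma norm_preserve {d : ℕ} {A : Matrix (Fin d) (Fin d) ℂ} (hA : A.IsHermitian) (x : Fin d → ℂ) :
    star x ⬝ᵥ x = ∑ i,
      (Complex.normSq ((star (hA.eigenvectorUnitary : Matrix (Fin d) (Fin d) ℂ) *ᵥ x) i) : ℂ) := by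
  set U : Matrix (Fin d) (Fin d) ℂ := (hA.eigenvectorUnitary : Matrix (Fin d) (Fin d) ℂ) with hU
  set y : Fin d → ℂ := star U *ᵥ x with hy
  have hsy : star y = star x ᵥ* U := by
    rw [hy, star_mulVec, Matrix.star_eq_conjTranspose, Matrix.conjTranspose_conjTranspose]
  have h1 : star y ⬝ᵥ y = star x ⬝ᵥ x := by
    rw [hsy, hy, ← Matrix.dotProduct_mulVec, Matrix.mulVec_mulVec]
    rw [show U * star U = 1 from Unitary.coe_mul_star_self hA.eigenvectorUnitary,
      Matrix.one_mulVec]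
  rw [← h1]
  show ∑ i, (star y) i * y i = ∑ i, (Complex.normSq (y i) : ℂ)
  refine Finset.sum_congr rfl fun i _ => ?_
  simp only [Pi.star_apply, Complex.star_def]
  rw [mul_comm, Complex.mul_conj]

lemma quad_real {d : ℕ} {A : Matrix (Fin d) (Fin d) ℂ} (hA : A.IsHermitian) (x : Fin d → ℂ) :
    star x ⬝ᵥ (A *ᵥ x) = ((∑ i, hA.eigenvalues i *
      Complex.normSq ((star (hA.eigenvectorUnitary : Matrix (Fin d) (Fin d) ℂ) *ᵥ x) i) : ℝ) : ℂ) := by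
  rw [quad_expand hA x]
  push_cast
  rfl

lemma norm_real {d : ℕ} {A : Matrix (Fin d) (Fin d) ℂ} (hA : A.IsHermitian) {x : Fin d → ℂ}
    (hx : star x ⬝ᵥ x = 1) :
    ∑ i, Complex.normSq ((star (hA.eigenvectorUnitary : Matrix (Fin d) (Fin d) ℂ) *ᵥ x) i) = 1 := by
  have h := (norm_preserve hA x).symm.trans hx
  rw [show ∑ i, (Complex.normSq ((star (hA.eigenvectorUnitary : Matrix (Fin d) (Fin d) ℂ) *ᵥ x) i) : ℂ)
      = ((∑ i, Complex.normSq ((star (hA.eigenvectorUnitary : Matrix (Fin d) (Fin d) ℂ) *ᵥ x) i) : ℝ) : ℂ)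
    from by push_cast; rfl] at h
  exact_mod_cast h

lemma re_quad_le {d : ℕ} {A : Matrix (Fin d) (Fin d) ℂ} (hA : A.IsHermitian) {x : Fin d → ℂ}
    (hx : star x ⬝ᵥ x = 1) {c : ℝ} (hc : ∀ i, hA.eigenvalues i ≤ c) :
    (star x ⬝ᵥ (A *ᵥ x)).re ≤ c := by
  rw [quad_real hA x, Complex.ofReal_re]
  calc ∑ i, hA.eigenvalues i *
        Complex.normSq ((star (hA.eigenvectorUnitary : Matrix (Fin d) (Fin d) ℂ) *ᵥ x) i)
      ≤ ∑ i, c * Complex.normSq ((star (hA.eigenvectorUnitary : Matrix (Fin d) (Fin d) ℂ) *ᵥ x) i) :=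
        Finset.sum_le_sum fun i _ => mul_le_mul_of_nonneg_right (hc i) (Complex.normSq_nonneg _)
    _ = c := by rw [← Finset.mul_sum, norm_real hA hx, mul_one]

lemma abs_re_quad_le {d : ℕ} {A : Matrix (Fin d) (Fin d) ℂ} (hA : A.IsHermitian) {x : Fin d → ℂ}
    (hx : star x ⬝ᵥ x = 1) :
    |(star x ⬝ᵥ (A *ᵥ x)).re| ≤ traceNorm A := by
  rw [quad_real hA x, Complex.ofReal_re, traceNorm_hermitian hA]
  set n : Fin d → ℝ := fun i =>
    Complex.normSq ((star (hA.eigenvectorUnitary : Matrix (Fin d) (Fin d) ℂ) *ᵥ x) i) with hn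
  have hn1 : ∑ i, n i = 1 := norm_real hA hx
  have hni : ∀ i, n i ≤ 1 := fun i => by
    rw [← hn1]
    exact Finset.single_le_sum (fun j _ => Complex.normSq_nonneg _) (Finset.mem_univ i)
  calc |∑ i, hA.eigenvalues i * n i| ≤ ∑ i, |hA.eigenvalues i * n i| :=
        Finset.abs_sum_le_sum_abs _ _
    _ ≤ ∑ i, |hA.eigenvalues i| := by
        refine Finset.sum_le_sum fun i _ => ?_
        rw [abs_mul]
        calc |hA.eigenvalues i| * |n i| ≤ |hA.eigenvalues i| * 1 := by
              refine mul_le_mul_of_nonneg_left ?_ (abs_nonneg _)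
              rw [abs_of_nonneg (Complex.normSq_nonneg _)]
              exact hni i
          _ = _ := mul_one _

lemma gap_bound {d : ℕ} {M : Matrix (Fin d) (Fin d) ℂ} (hH : M.IsHermitian)
    {lam Δ : ℝ} (hΔ : 0 < Δ) (i₀ : Fin d) (hi₀ : hH.eigenvalues i₀ = lam)
    (hgap : ∀ j, j ≠ i₀ → hH.eigenvalues j ≤ lam - Δ)
    {ψ ψ' : Fin d → ℂ} (hψu : star ψ ⬝ᵥ ψ = 1) (hψ'u : star ψ' ⬝ᵥ ψ' = 1)
    (hψ : M *ᵥ ψ = (lam : ℂ) • ψ) :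
    (star ψ' ⬝ᵥ (M *ᵥ ψ')).re ≤ lam - Δ * (1 - Complex.normSq (star ψ ⬝ᵥ ψ')) := by
  set U : Matrix (Fin d) (Fin d) ℂ := (hH.eigenvectorUnitary : Matrix (Fin d) (Fin d) ℂ) with hU
  set cv : Fin d → ℂ := star U *ᵥ ψ with hcvdef
  set y : Fin d → ℂ := star U *ᵥ ψ' with hydef
  set f : Fin d → ℂ := RCLike.ofReal ∘ hH.eigenvalues with hf
  have hUM : star U * M = diagonal f * star U := by
    conv_lhs => rw [hH.spectral_theorem, Unitary.conjStarAlgAut_apply]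
    rw [← Matrix.mul_assoc, ← Matrix.mul_assoc,
      show star U * U = 1 from Unitary.coe_star_mul_self hH.eigenvectorUnitary, Matrix.one_mul]
  have heig : ∀ j, f j * cv j = (lam : ℂ) * cv j := by
    intro j
    have h1 : star U *ᵥ (M *ᵥ ψ) = diagonal f *ᵥ cv := by
      rw [Matrix.mulVec_mulVec, hUM, ← Matrix.mulVec_mulVec]
    have h2 : star U *ᵥ (M *ᵥ ψ) = (lam : ℂ) • cv := by
      rw [hψ, Matrix.mulVec_smul]
    have := h1.symm.trans h2
    have := congrFun this j
    rw [Matrix.mulVec_diagonal] at this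
    simpa using this
  have hcv0 : ∀ j, j ≠ i₀ → cv j = 0 := by
    intro j hj
    have h := heig j
    have hne : f j ≠ (lam : ℂ) := by
      have := hgap j hj
      simp only [hf, Function.comp_apply]
      intro hcontra
      have : hH.eigenvalues j = lam := RCLike.ofReal_inj.mp hcontra
      linarith
    by_contra h0
    exact hne (mul_right_cancel₀ h0 h)
  have hψeq : ψ = U *ᵥ cv := by
    rw [hcvdef, Matrix.mulVec_mulVec,
      show U * star U = 1 from Unitary.coe_mul_star_self hH.eigenvectorUnitary, Matrix.one_mulVec]
  have hdot : star ψ ⬝ᵥ ψ' = star (cv i₀) * y i₀ := by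
    have h1 : star ψ ⬝ᵥ ψ' = star cv ⬝ᵥ y := by
      conv_lhs => rw [hψeq]
      rw [star_mulVec, ← Matrix.dotProduct_mulVec, ← Matrix.star_eq_conjTranspose]
    rw [h1]
    rw [show star cv ⬝ᵥ y = ∑ j, star (cv j) * y j from rfl]
    refine Finset.sum_eq_single i₀ (fun j _ hj => ?_) (fun h => absurd (Finset.mem_univ i₀) h)
    rw [hcv0 j hj, star_zero, zero_mul]
  have hcv1 : Complex.normSq (cv i₀) = 1 := by
    have h1 := norm_real hH hψu
    rw [← h1]
    symm
    refine Finset.sum_eq_single i₀ (fun j _ hj => ?_) (fun h => absurd (Finset.mem_univ i₀) h)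
    show Complex.normSq (cv j) = 0
    rw [hcv0 j hj]
    simp
  set t : ℝ := Complex.normSq (star ψ ⬝ᵥ ψ') with ht
  have hni₀ : Complex.normSq (y i₀) = t := by
    rw [ht, hdot, Complex.normSq_mul, show (star (cv i₀) : ℂ) = (starRingEnd ℂ) (cv i₀) from rfl,
      Complex.normSq_conj, hcv1, one_mul]
  have hn1 : ∑ i, Complex.normSq (y i) = 1 := norm_real hH hψ'u
  have hsplit : Complex.normSq (y i₀) + ∑ j ∈ Finset.univ.erase i₀, Complex.normSq (y j) = 1 := by
    rw [Finset.add_sum_erase Finset.univ (fun j => Complex.normSq (y j)) (Finset.mem_univ i₀)]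
    exact hn1
  have herase : ∑ j ∈ Finset.univ.erase i₀, Complex.normSq (y j) = 1 - t := by
    rw [hni₀] at hsplit; linarith
  rw [quad_real hH ψ', Complex.ofReal_re]
  have hexp : ∑ i, hH.eigenvalues i * Complex.normSq (y i)
      = lam * t + ∑ j ∈ Finset.univ.erase i₀, hH.eigenvalues j * Complex.normSq (y j) := by
    rw [← Finset.add_sum_erase Finset.univ (fun i => hH.eigenvalues i * Complex.normSq (y i))
      (Finset.mem_univ i₀), hi₀, hni₀]
  rw [hexp]
  have hb : ∑ j ∈ Finset.univ.erase i₀, hH.eigenvalues j * Complex.normSq (y j)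
      ≤ (lam - Δ) * (1 - t) := by
    calc ∑ j ∈ Finset.univ.erase i₀, hH.eigenvalues j * Complex.normSq (y j)
        ≤ ∑ j ∈ Finset.univ.erase i₀, (lam - Δ) * Complex.normSq (y j) := by
          refine Finset.sum_le_sum fun j hj => ?_
          exact mul_le_mul_of_nonneg_right (hgap j (Finset.ne_of_mem_erase hj))
            (Complex.normSq_nonneg _)
      _ = (lam - Δ) * (1 - t) := by rw [← Finset.mul_sum, herase]
  nlinarith [Complex.normSq_nonneg (star ψ ⬝ᵥ ψ')]

section ProjectorAlgebra
variable {d : ℕ} (ψ ψ' : Fin d → ℂ)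

lemma proj_diff_sq (hψu : star ψ ⬝ᵥ ψ = 1) (hψ'u : star ψ' ⬝ᵥ ψ' = 1) :
    (outer ψ ψ - outer ψ' ψ') * (outer ψ ψ - outer ψ' ψ')
      = outer ψ ψ + outer ψ' ψ' - (star ψ ⬝ᵥ ψ') • outer ψ ψ'
        - (star ψ' ⬝ᵥ ψ) • outer ψ' ψ := by
  simp only [sub_mul, mul_sub, outer_mul_outer, hψu, hψ'u, one_smul]
  abel

lemma proj_diff_cube (hψu : star ψ ⬝ᵥ ψ = 1) (hψ'u : star ψ' ⬝ᵥ ψ' = 1) :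
    (outer ψ ψ - outer ψ' ψ') * (outer ψ ψ - outer ψ' ψ') * (outer ψ ψ - outer ψ' ψ')
      = ((1 : ℂ) - (star ψ ⬝ᵥ ψ') * (star ψ' ⬝ᵥ ψ)) • (outer ψ ψ - outer ψ' ψ') := by
  rw [proj_diff_sq ψ ψ' hψu hψ'u]
  simp only [sub_mul, add_mul, mul_sub, smul_mul_assoc, outer_mul_outer, hψu, hψ'u, one_smul,
    smul_smul, sub_smul, smul_sub]
  module

lemma proj_diff_sq_trace (hψu : star ψ ⬝ᵥ ψ = 1) (hψ'u : star ψ' ⬝ᵥ ψ' = 1) :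
    ((outer ψ ψ - outer ψ' ψ') * (outer ψ ψ - outer ψ' ψ')).trace
      = 2 - 2 * ((star ψ ⬝ᵥ ψ') * (star ψ' ⬝ᵥ ψ)) := by
  rw [proj_diff_sq ψ ψ' hψu hψ'u]
  rw [Matrix.trace_sub, Matrix.trace_sub, Matrix.trace_add, Matrix.trace_smul, Matrix.trace_smul,
    trace_outer, trace_outer, trace_outer, trace_outer, hψu, hψ'u]
  simp only [smul_eq_mul]
  ring

end ProjectorAlgebra

section SpectralCube
variable {d : ℕ} {A : Matrix (Fin d) (Fin d) ℂ} (hA : A.IsHermitian)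

lemma spectral_sq : A * A = (hA.eigenvectorUnitary : Matrix (Fin d) (Fin d) ℂ) *
    diagonal (fun i => ((hA.eigenvalues i : ℂ)) * (hA.eigenvalues i : ℂ)) *
    star (hA.eigenvectorUnitary : Matrix (Fin d) (Fin d) ℂ) := by
  conv_lhs => rw [hA.spectral_theorem, Unitary.conjStarAlgAut_apply]
  rw [conj_diag_mul_conj_diag]
  rfl

lemma cube_eigen {r : ℝ} (h3 : A * A * A = ((r : ℝ) : ℂ) • A) (i : Fin d) :
    hA.eigenvalues i ^ 3 = r * hA.eigenvalues i := by
  set U := hA.eigenvectorUnitary with hU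
  have hst' : A = (U : Matrix (Fin d) (Fin d) ℂ) *
      diagonal (fun i => (hA.eigenvalues i : ℂ)) * star (U : Matrix (Fin d) (Fin d) ℂ) :=
    hA.spectral_theorem
  have hcube : A * A * A = (U : Matrix (Fin d) (Fin d) ℂ) *
      diagonal (fun i => ((hA.eigenvalues i : ℂ)) * (hA.eigenvalues i : ℂ) * (hA.eigenvalues i : ℂ)) *
      star (U : Matrix (Fin d) (Fin d) ℂ) := by
    have h := conj_diag_mul_conj_diag U
      (fun i => ((hA.eigenvalues i : ℂ)) * (hA.eigenvalues i : ℂ))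
      (fun i => (hA.eigenvalues i : ℂ))
    rw [← spectral_sq hA, ← hst'] at h
    exact h
  have hsmul : ((r : ℝ) : ℂ) • A = (U : Matrix (Fin d) (Fin d) ℂ) *
      diagonal (fun i => ((r : ℝ) : ℂ) * (hA.eigenvalues i : ℂ)) *
      star (U : Matrix (Fin d) (Fin d) ℂ) := by
    symm
    calc (U : Matrix (Fin d) (Fin d) ℂ) *
        diagonal (fun i => ((r : ℝ) : ℂ) * (hA.eigenvalues i : ℂ)) *
        star (U : Matrix (Fin d) (Fin d) ℂ)
        = ((r : ℝ) : ℂ) • ((U : Matrix (Fin d) (Fin d) ℂ) *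
            diagonal (fun i => (hA.eigenvalues i : ℂ)) * star (U : Matrix (Fin d) (Fin d) ℂ)) := by
          rw [show (diagonal (fun i => ((r : ℝ) : ℂ) * (hA.eigenvalues i : ℂ)))
              = ((r : ℝ) : ℂ) • diagonal (fun i => (hA.eigenvalues i : ℂ)) from by
            rw [← Matrix.diagonal_smul]
            rfl]
          rw [mul_smul_comm, smul_mul_assoc]
      _ = ((r : ℝ) : ℂ) • A := by rw [← hst']
  have hdiag := unitary_conj_cancel U ((hcube.symm.trans (h3.trans hsmul)))
  have hfun := congrArg (fun X : Matrix (Fin d) (Fin d) ℂ => X i i) hdiag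
  simp only [Matrix.diagonal_apply_eq] at hfun
  have h4 : ((hA.eigenvalues i ^ 3 : ℝ) : ℂ) = ((r * hA.eigenvalues i : ℝ) : ℂ) := by
    push_cast
    rw [← hfun]; ring
  exact_mod_cast h4

lemma sq_trace_eigen : (A * A).trace = ((∑ i, hA.eigenvalues i ^ 2 : ℝ) : ℂ) := by
  rw [spectral_sq hA, trace_unitary_conj, Matrix.trace_diagonal]
  push_cast
  exact Finset.sum_congr rfl fun i _ => by ring

end SpectralCube

/-- Let `M` be a `d × d` positive semidefinite Hermitian matrix whose largest
eigenvalue `lam` exceeds its second-largest eigenvalue (with multiplicity) by at least `Δ > 0`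
(encoded: every eigenvalue is `≤ lam`, `lam` is attained, and any eigenvalue at an index other
than one attaining `lam` is `≤ lam − Δ`, which in particular forces `lam` to be simple).
Let `M'` be Hermitian with `‖M − M'‖_tr ≤ ε ≤ Δ/2` and largest eigenvalue `lam'`.
Then `|lam − lam'| ≤ ε`; moreover, if `ψ, ψ'` are unit eigenvectors of `M, M'` for `lam, lam'`,
then `‖|ψ⟩⟨ψ| − |ψ'⟩⟨ψ'|‖_tr ≤ 2√(2ε/Δ)`. -/
theorem principal_eigenpair_perturbation {d : ℕ} (M M' : Matrix (Fin d) (Fin d) ℂ)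
    (hM : M.PosSemidef) (hM' : M'.IsHermitian)
    (Δ ε : ℝ) (hΔ : 0 < Δ) (hεΔ : ε ≤ Δ / 2)
    (htr : traceNorm (M - M') ≤ ε)
    (lam lam' : ℝ)
    (hmax : ∀ i, hM.1.eigenvalues i ≤ lam)
    (hatt : ∃ i, hM.1.eigenvalues i = lam)
    (hgap : ∀ i j, i ≠ j → hM.1.eigenvalues i = lam → hM.1.eigenvalues j ≤ lam - Δ)
    (hmax' : ∀ i, hM'.eigenvalues i ≤ lam')
    (hatt' : ∃ i, hM'.eigenvalues i = lam')
    (ψ ψ' : Fin d → ℂ)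
    (hψu : star ψ ⬝ᵥ ψ = 1) (hψ'u : star ψ' ⬝ᵥ ψ' = 1)
    (hψ : M *ᵥ ψ = (lam : ℂ) • ψ) (hψ' : M' *ᵥ ψ' = (lam' : ℂ) • ψ') :
    |lam - lam'| ≤ ε ∧
    traceNorm (outer ψ ψ - outer ψ' ψ') ≤ 2 * Real.sqrt (2 * ε / Δ) := by
  have hε0 : 0 ≤ ε := le_trans (traceNorm_nonneg' _) htr
  have hAH : (M - M').IsHermitian := hM.1.sub hM'
  -- exact Rayleigh values at the eigenvectors
  have hlamC : star ψ ⬝ᵥ (M *ᵥ ψ) = (lam : ℂ) := by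
    rw [hψ, dotProduct_smul, hψu, smul_eq_mul, mul_one]
  have hlam'C : star ψ' ⬝ᵥ (M' *ᵥ ψ') = (lam' : ℂ) := by
    rw [hψ', dotProduct_smul, hψ'u, smul_eq_mul, mul_one]
  -- difference quadratic forms
  have hdiffψ : (star ψ ⬝ᵥ ((M - M') *ᵥ ψ)).re = lam - (star ψ ⬝ᵥ (M' *ᵥ ψ)).re := by
    rw [Matrix.sub_mulVec, dotProduct_sub, Complex.sub_re, hlamC, Complex.ofReal_re]
  have hdiffψ' : (star ψ' ⬝ᵥ ((M - M') *ᵥ ψ')).re = (star ψ' ⬝ᵥ (M *ᵥ ψ')).re - lam' := by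
    rw [Matrix.sub_mulVec, dotProduct_sub, Complex.sub_re, hlam'C, Complex.ofReal_re]
  have habsψ : |(star ψ ⬝ᵥ ((M - M') *ᵥ ψ)).re| ≤ ε := le_trans (abs_re_quad_le hAH hψu) htr
  have habsψ' : |(star ψ' ⬝ᵥ ((M - M') *ᵥ ψ')).re| ≤ ε := le_trans (abs_re_quad_le hAH hψ'u) htr
  have hray1 : (star ψ ⬝ᵥ (M' *ᵥ ψ)).re ≤ lam' := re_quad_le hM' hψu hmax'
  have hray2 : (star ψ' ⬝ᵥ (M *ᵥ ψ')).re ≤ lam := re_quad_le hM.1 hψ'u hmax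
  have h1a : lam - lam' ≤ ε := by
    have := abs_le.mp habsψ
    linarith [this.1, this.2]
  have h1b : lam' - lam ≤ ε := by
    have := abs_le.mp habsψ'
    linarith [this.1, this.2]
  refine ⟨abs_le.mpr ⟨by linarith, by linarith⟩, ?_⟩
  -- Part 2
  obtain ⟨i₀, hi₀⟩ := hatt
  have hgap' : ∀ j, j ≠ i₀ → hM.1.eigenvalues j ≤ lam - Δ :=
    fun j hj => hgap i₀ j (Ne.symm hj) hi₀
  set t : ℝ := Complex.normSq (star ψ ⬝ᵥ ψ') with ht
  have hgb : (star ψ' ⬝ᵥ (M *ᵥ ψ')).re ≤ lam - Δ * (1 - t) :=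
    gap_bound hM.1 hΔ i₀ hi₀ hgap' hψu hψ'u hψ
  have hΔt : Δ * (1 - t) ≤ 2 * ε := by
    have := abs_le.mp habsψ'
    linarith [this.1, this.2]
  have ht2 : 1 - t ≤ 2 * ε / Δ := by
    rw [le_div_iff₀ hΔ]
    linarith
  -- the projector difference
  set B : Matrix (Fin d) (Fin d) ℂ := outer ψ ψ - outer ψ' ψ' with hB
  have hBH : B.IsHermitian := by
    show Bᴴ = B
    rw [hB, Matrix.conjTranspose_sub, outer_conjTranspose, outer_conjTranspose]
  have hcc' : (star ψ ⬝ᵥ ψ') * (star ψ' ⬝ᵥ ψ) = ((t : ℝ) : ℂ) := by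
    rw [Matrix.star_dotProduct ψ' ψ, show (star (star ψ ⬝ᵥ ψ') : ℂ)
      = (starRingEnd ℂ) (star ψ ⬝ᵥ ψ') from rfl, Complex.mul_conj, ht]
  have h3 : B * B * B = (((1 - t : ℝ)) : ℂ) • B := by
    rw [hB, proj_diff_cube ψ ψ' hψu hψ'u, hcc']
    norm_num
  have hν := cube_eigen hBH h3
  have hsum : ∑ i, hBH.eigenvalues i ^ 2 = 2 * (1 - t) := by
    have h4 := sq_trace_eigen hBH
    have h6 : (B * B).trace = 2 - 2 * ((star ψ ⬝ᵥ ψ') * (star ψ' ⬝ᵥ ψ)) := by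
      rw [hB]
      exact proj_diff_sq_trace ψ ψ' hψu hψ'u
    have h5 : ((∑ i, hBH.eigenvalues i ^ 2 : ℝ) : ℂ) = ((2 * (1 - t) : ℝ) : ℂ) := by
      rw [← h4, h6, hcc']
      push_cast
      ring
    exact_mod_cast h5
  have h1t : 0 ≤ 1 - t := by
    have : (0 : ℝ) ≤ ∑ i, hBH.eigenvalues i ^ 2 :=
      Finset.sum_nonneg fun i _ => sq_nonneg _
    linarith
  have htn : traceNorm B = ∑ i, |hBH.eigenvalues i| := traceNorm_hermitian hBH
  rcases eq_or_lt_of_le h1t with h0 | hpos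
  · -- degenerate case : 1 - t = 0, all eigenvalues vanish
    have hz : ∀ i, hBH.eigenvalues i = 0 := by
      intro i
      have := hν i
      rw [← h0, zero_mul] at this
      exact pow_eq_zero_iff (n := 3) (by norm_num) |>.mp this
    rw [htn]
    have : ∑ i, |hBH.eigenvalues i| = 0 := by
      refine Finset.sum_eq_zero fun i _ => ?_
      rw [hz i, abs_zero]
    rw [this]
    positivity
  · set s : ℝ := Real.sqrt (1 - t) with hs
    have hs2 : s ^ 2 = 1 - t := Real.sq_sqrt (le_of_lt hpos)
    have hspos : 0 < s := Real.sqrt_pos.mpr hpos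
    have habsν : ∀ i, |hBH.eigenvalues i| = hBH.eigenvalues i ^ 2 / s := by
      intro i
      have hfact : hBH.eigenvalues i * (hBH.eigenvalues i ^ 2 - (1 - t)) = 0 := by
        have := hν i
        ring_nf
        ring_nf at this
        linarith
      rcases mul_eq_zero.mp hfact with h | h
      · rw [h]
        simp
      · have hsq : hBH.eigenvalues i ^ 2 = 1 - t := by linarith
        rw [← Real.sqrt_sq_eq_abs, hsq, ← hs]
        rw [eq_div_iff hspos.ne']
        nlinarith [hs2]
    rw [htn]
    have hsumabs : ∑ i, |hBH.eigenvalues i| = 2 * s := by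
      calc ∑ i, |hBH.eigenvalues i| = ∑ i, hBH.eigenvalues i ^ 2 / s := by
            exact Finset.sum_congr rfl fun i _ => habsν i
        _ = (∑ i, hBH.eigenvalues i ^ 2) / s := by rw [Finset.sum_div]
        _ = (2 * (1 - t)) / s := by rw [hsum]
        _ = 2 * s := by
            rw [← hs2]
            field_simp
    rw [hsumabs]
    have : s ≤ Real.sqrt (2 * ε / Δ) := by
      rw [hs]
      exact Real.sqrt_le_sqrt ht2
    linarith
end

section
/- Let |u⟩ and |v⟩ be unit vectors in ℂ^d and let α, β be real numbers. Then every eigenvalue of the Hermitian matrix α|u⟩⟨u| + β|v⟩⟨v| is either 0 or equal to (α+β)/2 + (1/2)√((α−β)² + 4αβ|⟨u|v⟩|²) or (α+β)/2 − (1/2)√((α−β)² + 4αβ|⟨u|v⟩|²). (Note that (α−β)² + 4αβ|⟨u|v⟩|² ≥ 0 since |⟨u|v⟩|² ∈ [0,1].) -/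
open Matrix

lemma vecMulVec_mulVec' {d : ℕ} (u x w : Fin d → ℂ) :
    Matrix.vecMulVec u x *ᵥ w = (x ⬝ᵥ w) • u := by
  funext i
  simp [Matrix.mulVec, Matrix.vecMulVec_apply, dotProduct, Finset.mul_sum, Pi.smul_apply,
    mul_assoc, mul_comm, mul_left_comm, Finset.sum_mul]

/-- For unit vectors `u, v ∈ ℂ^d` and reals `α, β`, every eigenvalue of
`α|u⟩⟨u| + β|v⟩⟨v|` is either `0` or
`(α+β)/2 ± (1/2)√((α−β)² + 4αβ|⟨u|v⟩|²)`. -/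
theorem two_projector_eigenvalues {d : ℕ} (u v : Fin d → ℂ)
    (hu : star u ⬝ᵥ u = 1) (hv : star v ⬝ᵥ v = 1) (α β : ℝ)
    (μ : ℂ) (w : Fin d → ℂ) (hw : w ≠ 0)
    (heig : ((α : ℂ) • outer u u + (β : ℂ) • outer v v) *ᵥ w = μ • w) :
    μ = 0 ∨
    μ = (((α + β) / 2 +
        Real.sqrt ((α - β) ^ 2 + 4 * α * β * ‖star u ⬝ᵥ v‖ ^ 2) / 2 : ℝ) : ℂ) ∨
    μ = (((α + β) / 2 -
        Real.sqrt ((α - β) ^ 2 + 4 * α * β * ‖star u ⬝ᵥ v‖ ^ 2) / 2 : ℝ) : ℂ) := by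
  set t : ℂ := star u ⬝ᵥ v with ht
  set a : ℂ := star u ⬝ᵥ w with ha
  set b : ℂ := star v ⬝ᵥ w with hb
  have hst : star v ⬝ᵥ u = (starRingEnd ℂ) t := by
    simp [ht, dotProduct, map_sum, mul_comm]
  have hW : ((α : ℂ) * a) • u + ((β : ℂ) * b) • v = μ • w := by
    rw [Matrix.add_mulVec, Matrix.smul_mulVec, Matrix.smul_mulVec, outer, outer,
      vecMulVec_mulVec', vecMulVec_mulVec'] at heig
    simpa [smul_smul, ha, hb] using heig
  have h1 : μ * a = (α : ℂ) * a + (β : ℂ) * b * t := by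
    have := congrArg (fun x => star u ⬝ᵥ x) hW
    simpa [dotProduct_add, dotProduct_smul, hu, ← ht, ← ha, smul_eq_mul,
      mul_comm, mul_left_comm, mul_assoc] using this.symm
  have h2 : μ * b = (α : ℂ) * a * (starRingEnd ℂ) t + (β : ℂ) * b := by
    have := congrArg (fun x => star v ⬝ᵥ x) hW
    simpa [dotProduct_add, dotProduct_smul, hv, hst, ← hb, smul_eq_mul,
      mul_comm, mul_left_comm, mul_assoc] using this.symm
  by_cases hμ : μ = 0
  · exact Or.inl hμ
  right
  -- Cauchy–Schwarz: |t| ≤ 1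
  have hT1 : ‖t‖ ^ 2 ≤ 1 := by
    have hcs := norm_inner_le_norm (𝕜 := ℂ)
      ((WithLp.equiv 2 (Fin d → ℂ)).symm u) ((WithLp.equiv 2 (Fin d → ℂ)).symm v)
    erw [EuclideanSpace.inner_toLp_toLp, dotProduct_comm] at hcs
    have hnu : ‖(WithLp.equiv 2 (Fin d → ℂ)).symm u‖ = 1 := by
      have h' : ‖(WithLp.equiv 2 (Fin d → ℂ)).symm u‖ ^ 2 = 1 := by
        erw [@norm_sq_eq_re_inner ℂ, EuclideanSpace.inner_toLp_toLp, dotProduct_comm, hu]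
        simp
      nlinarith [norm_nonneg ((WithLp.equiv 2 (Fin d → ℂ)).symm u)]
    have hnv : ‖(WithLp.equiv 2 (Fin d → ℂ)).symm v‖ = 1 := by
      have h' : ‖(WithLp.equiv 2 (Fin d → ℂ)).symm v‖ ^ 2 = 1 := by
        erw [@norm_sq_eq_re_inner ℂ, EuclideanSpace.inner_toLp_toLp, dotProduct_comm, hv]
        simp
      nlinarith [norm_nonneg ((WithLp.equiv 2 (Fin d → ℂ)).symm v)]
    rw [hnu, hnv, mul_one] at hcs
    have : ‖t‖ ≤ 1 := by simpa [ht] using hcs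
    nlinarith [norm_nonneg t]
  have hT0 : (0 : ℝ) ≤ ‖t‖ ^ 2 := sq_nonneg _
  have hD : (0 : ℝ) ≤ (α - β) ^ 2 + 4 * α * β * ‖t‖ ^ 2 := by
    nlinarith [sq_nonneg (α + β), sq_nonneg (α - β)]
  -- the quadratic equality
  have hTc : ((‖t‖ ^ 2 : ℝ) : ℂ) = t * (starRingEnd ℂ) t := by
    rw [Complex.mul_conj]
    norm_cast
    rw [Complex.sq_norm]
  have hQ : (μ - (α : ℂ)) * (μ - (β : ℂ)) = (α : ℂ) * (β : ℂ) * ((‖t‖ ^ 2 : ℝ) : ℂ) := by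
    by_cases hA : a = 0
    · by_cases hB : b = 0
      · exfalso
        apply hμ
        have : μ • w = 0 := by rw [← hW, hA, hB]; simp
        rcases smul_eq_zero.mp this with h | h
        · exact h
        · exact absurd h hw
      · -- a = 0, b ≠ 0 : μ = β and β * t = 0
        have hmb : μ = (β : ℂ) := by
          have h' : (μ - (β : ℂ)) * b = 0 := by
            have := h2; rw [hA] at this; linear_combination this
          rcases mul_eq_zero.mp h' with h | h
          · exact sub_eq_zero.mp h
          · exact absurd h hB
        have hbt : (β : ℂ) * t = 0 := by
          have h' : (β : ℂ) * t * b = 0 := by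
            have := h1; rw [hA] at this; linear_combination -this
          rcases mul_eq_zero.mp h' with h | h
          · exact h
          · exact absurd h hB
        rcases mul_eq_zero.mp hbt with h | h
        · rw [hmb, h]; ring
        · rw [hmb, hTc, h]; simp
    · by_cases hB : b = 0
      · -- b = 0, a ≠ 0 : μ = α and α * conj t = 0
        have hma : μ = (α : ℂ) := by
          have h' : (μ - (α : ℂ)) * a = 0 := by
            have := h1; rw [hB] at this; linear_combination this
          rcases mul_eq_zero.mp h' with h | h
          · exact sub_eq_zero.mp h
          · exact absurd h hA
        have hat : (α : ℂ) * (starRingEnd ℂ) t * a = 0 := by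
          have := h2; rw [hB] at this; linear_combination -this
        rcases mul_eq_zero.mp hat with h | h
        · rcases mul_eq_zero.mp h with h | h
          · rw [hma, h]; ring
          · rw [hma, hTc, h]; simp
        · exact absurd h hA
      · have e1 : (μ - (α : ℂ)) * a = (β : ℂ) * t * b := by linear_combination h1
        have e2 : (μ - (β : ℂ)) * b = (α : ℂ) * a * (starRingEnd ℂ) t := by linear_combination h2
        have := mul_right_cancel₀ (mul_ne_zero hA hB)
          (show (μ - (α : ℂ)) * (μ - (β : ℂ)) * (a * b)
              = (α : ℂ) * (β : ℂ) * ((‖t‖ ^ 2 : ℝ) : ℂ) * (a * b) by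
            rw [hTc]
            linear_combination (μ - (β : ℂ)) * b * e1 + (β : ℂ) * t * b * e2)
        exact this
  set D : ℝ := (α - β) ^ 2 + 4 * α * β * ‖t‖ ^ 2 with hDdef
  have hs : ((Real.sqrt D : ℝ) : ℂ) ^ 2 = ((D : ℝ) : ℂ) := by
    norm_cast
    exact Real.sq_sqrt hD
  have key : (μ - (((α + β) / 2 + Real.sqrt D / 2 : ℝ) : ℂ))
      * (μ - (((α + β) / 2 - Real.sqrt D / 2 : ℝ) : ℂ)) = 0 := by
    push_cast [hDdef] at hs hQ ⊢
    linear_combination hQ - (1 / 4 : ℂ) * hs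
  rcases mul_eq_zero.mp key with h | h
  · exact Or.inl (sub_eq_zero.mp h)
  · exact Or.inr (sub_eq_zero.mp h)
end

section
/- Let V be a d_A d_B × d_A matrix with V†V = I_{d_A} (an isometry from ℂ^{d_A} to ℂ^{d_A}⊗ℂ^{d_B}), and define the channel 𝓔(ρ) = Tr_B(V ρ V†) for d_A×d_A matrices ρ. Let ρ_𝓔 = (1/d_A) Σ_{k,l} |k⟩⟨l| ⊗ 𝓔(|k⟩⟨l|) be the (normalized) Choi state of 𝓔 on ℂ^{d_A}⊗ℂ^{d_A}, where (|k⟩) is the standard basis of ℂ^{d_A}. Then the unitarity of 𝓔 satisfies Tr(ρ_𝓔²) = Tr[ (Tr_A(V (I_{d_A}/d_A) V†))² ], i.e., the purity of the Choi state equals the purity of the environment output state on the maximally mixed input. -/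
open Matrix Kronecker

/-- Partial trace over the second (B) tensor factor. -/
noncomputable def ptraceB {dA dB : ℕ}
    (M : Matrix (Fin dA × Fin dB) (Fin dA × Fin dB) ℂ) : Matrix (Fin dA) (Fin dA) ℂ :=
  Matrix.of fun i i' => ∑ k : Fin dB, M (i, k) (i', k)

/-- Partial trace over the first (A) tensor factor. -/
noncomputable def ptraceA {dA dB : ℕ}
    (M : Matrix (Fin dA × Fin dB) (Fin dA × Fin dB) ℂ) : Matrix (Fin dB) (Fin dB) ℂ :=
  Matrix.of fun k k' => ∑ i : Fin dA, M (i, k) (i, k')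

/-- Let `V : ℂ^{dA} → ℂ^{dA} ⊗ ℂ^{dB}` be an isometry (`V† V = I`), defining
the channel `𝓔(ρ) = Tr_B(V ρ V†)`, and let
`ρ_𝓔 = (1/dA) Σ_{k,l} |k⟩⟨l| ⊗ 𝓔(|k⟩⟨l|)` be its normalized Choi state.  Then the unitarity
`Tr(ρ_𝓔²)` equals `Tr[(Tr_A(V (I/dA) V†))²]`, the purity of the environment output state on
the maximally mixed input. -/
theorem unitarity_eq_env_purity {dA dB : ℕ}
    (V : Matrix (Fin dA × Fin dB) (Fin dA) ℂ) (hV : Vᴴ * V = 1) :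
    ((((dA : ℂ))⁻¹ • ∑ k : Fin dA, ∑ l : Fin dA,
          Matrix.single k l (1 : ℂ) ⊗ₖ
            ptraceB (V * Matrix.single k l (1 : ℂ) * Vᴴ)) ^ 2).trace =
      ((ptraceA (V * ((dA : ℂ)⁻¹ • (1 : Matrix (Fin dA) (Fin dA) ℂ)) * Vᴴ)) ^ 2).trace := by
  have hent : ∀ (k l : Fin dA) (x y : Fin dA × Fin dB),
      (V * Matrix.single k l (1:ℂ) * Vᴴ) x y = V x k * star (V y l) := by
    intro k l x y
    simp [Matrix.mul_apply, Matrix.single, conjTranspose_apply, Finset.sum_ite_eq,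
      ite_and, mul_comm]
  have hent2 : ∀ (x y : Fin dA × Fin dB),
      (V * ((dA : ℂ)⁻¹ • (1 : Matrix (Fin dA) (Fin dA) ℂ)) * Vᴴ) x y
        = (dA : ℂ)⁻¹ * ∑ m : Fin dA, V x m * star (V y m) := by
    intro x y
    simp [Matrix.mul_apply, conjTranspose_apply, Matrix.one_apply, Finset.sum_ite_eq,
      Finset.mul_sum, mul_comm, mul_left_comm, mul_assoc]
  simp only [ptraceB, ptraceA, hent, hent2]
  simp only [pow_two, Matrix.trace, Matrix.diag, Matrix.mul_apply, Matrix.smul_apply,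
    Finset.sum_apply, Matrix.kroneckerMap_apply, Matrix.of_apply, Matrix.single,
    Matrix.sum_apply, smul_eq_mul, Fintype.sum_prod_type, ite_mul, zero_mul, mul_ite, mul_zero,
    mul_one]
  simp only [ite_and, Finset.sum_ite_irrel, Finset.sum_const_zero, Finset.sum_ite_eq,
    Finset.sum_ite_eq', Finset.mem_univ, if_true, one_mul]
  simp only [Finset.mul_sum, Finset.sum_mul]
  trans (∑ p : Fin dA × Fin dA × Fin dA × Fin dA × Fin dB × Fin dB,
      (↑dA:ℂ)⁻¹ * (V (p.2.1, p.2.2.2.2.2) p.1 * (starRingEnd ℂ) (V (p.2.2.2.1, p.2.2.2.2.2) p.2.2.1)) *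
        ((↑dA:ℂ)⁻¹ * (V (p.2.2.2.1, p.2.2.2.2.1) p.2.2.1 * (starRingEnd ℂ) (V (p.2.1, p.2.2.2.2.1) p.1))))
  · simp only [Fintype.sum_prod_type, RCLike.star_def]
  trans (∑ q : Fin dB × Fin dB × Fin dA × Fin dA × Fin dA × Fin dA,
      (↑dA:ℂ)⁻¹ * (V (q.2.2.2.2.1, q.1) q.2.2.2.2.2 * (starRingEnd ℂ) (V (q.2.2.2.2.1, q.2.1) q.2.2.2.2.2)) *
        ((↑dA:ℂ)⁻¹ * (V (q.2.2.1, q.2.1) q.2.2.2.1 * (starRingEnd ℂ) (V (q.2.2.1, q.1) q.2.2.2.1))))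
  · exact Fintype.sum_equiv
      ⟨fun p => (p.2.2.2.2.2, p.2.2.2.2.1, p.2.2.2.1, p.2.2.1, p.2.1, p.1),
       fun q => (q.2.2.2.2.2, q.2.2.2.2.1, q.2.2.2.1, q.2.2.1, q.2.1, q.1),
       fun _ => rfl, fun _ => rfl⟩ _ _ (fun p => by simp only [Equiv.coe_fn_mk]; ring)
  · simp only [Fintype.sum_prod_type, RCLike.star_def]
end
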